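/- arXiv:2509.18389 — 3 statements merged into one kernel-verified Lean document; each statement's English description precedes it below -/
import Mathlib

section
/- (Lemma 3) For every L ≥ 0 and every query index ω ∈ {1,…,n}, the ℓ1 norm of the gradient of the looped L-layer Transformer output at the TD parameters satisfies ‖∇F_L^{(ω)}(A^TD, 0_{1×2n})‖_1 ≤ ((L² + L)/2) ν + L ξ, where ν = 2n(n(1+γ)²‖v‖_∞ + (1+γ)²) and ξ = 2n(1+γ) are constants independent of L. -/
open Matrix Filter Topology

noncomputable section

/-- Index type for `2n` rows (two stacked copies of the feature dimension). -/
abbrev TwoN (n : ℕ) := Fin n ⊕ Fin n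
/-- Row index type for prompts: `2n + 1`. -/
abbrev RIdx (n : ℕ) := TwoN n ⊕ Unit
/-- Column index type for prompts: `n + 1` (context columns plus the query column). -/
abbrev CIdx (n : ℕ) := Fin n ⊕ Unit

/-- The mask `M = [[I_n, 0],[0, 0]]`. -/
def maskM (n : ℕ) : Matrix (CIdx n) (CIdx n) ℝ := Matrix.fromBlocks 1 0 0 0

/-- One linear attention layer `Z ↦ Z + P̃ Z M (Zᵀ Q̃ Z)`. -/
def attnLayer (n : ℕ) (Pm Qm : Matrix (RIdx n) (RIdx n) ℝ)
    (Z : Matrix (RIdx n) (CIdx n) ℝ) : Matrix (RIdx n) (CIdx n) ℝ :=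
  Z + Pm * Z * maskM n * (Zᵀ * Qm * Z)

/-- `P̃ = [[0, 0],[u, 1]]`. -/
def Pmat (n : ℕ) (u : Matrix Unit (TwoN n) ℝ) : Matrix (RIdx n) (RIdx n) ℝ :=
  Matrix.fromBlocks 0 0 u 1

/-- `Q̃ = [[A, 0],[0, 0]]`. -/
def Qmat (n : ℕ) (A : Matrix (TwoN n) (TwoN n) ℝ) : Matrix (RIdx n) (RIdx n) ℝ :=
  Matrix.fromBlocks A 0 0 0

/-- `A^TD = [[-I, I],[0, 0]]`. -/
def Atd (n : ℕ) : Matrix (TwoN n) (TwoN n) ℝ := Matrix.fromBlocks (-1) 1 0 0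

/-- A row-stochastic matrix. -/
def RowStochastic {n : ℕ} (P : Matrix (Fin n) (Fin n) ℝ) : Prop :=
  (∀ i k, 0 ≤ P i k) ∧ ∀ i, ∑ k, P i k = 1

/-- TD iterates `w_0 = 0`, `w_{l+1} = r + γ P w_l`. -/
def tdW {n : ℕ} (γ : ℝ) (P : Matrix (Fin n) (Fin n) ℝ) (r : Fin n → ℝ) : ℕ → Fin n → ℝ
  | 0 => 0
  | l + 1 => r + γ • P.mulVec (tdW γ P r l)

/-- The value vector `v = (I - γ P)⁻¹ r`. -/
def valueV {n : ℕ} (γ : ℝ) (P : Matrix (Fin n) (Fin n) ℝ) (r : Fin n → ℝ) : Fin n → ℝ :=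
  ((1 : Matrix (Fin n) (Fin n) ℝ) - γ • P)⁻¹.mulVec r

/-- The prompt `Z_0(j)`: the `i`-th column is `(e_i, γ Pᵀ e_i, r_i)` and the query
column is `(e_j, 0, 0)`. -/
def prompt {n : ℕ} (γ : ℝ) (P : Matrix (Fin n) (Fin n) ℝ) (r : Fin n → ℝ) (j : Fin n) :
    Matrix (RIdx n) (CIdx n) ℝ := fun p q =>
  match p, q with
  | Sum.inl (Sum.inl k), Sum.inl i => if k = i then 1 else 0
  | Sum.inl (Sum.inr k), Sum.inl i => γ * P i k
  | Sum.inr _, Sum.inl i => r i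
  | Sum.inl (Sum.inl k), Sum.inr _ => if k = j then 1 else 0
  | Sum.inl (Sum.inr _), Sum.inr _ => 0
  | Sum.inr _, Sum.inr _ => 0

/-- Embeddings `Z_l` of the looped transformer with shared parameters `(A, u)`,
starting from the prompt `Z_0(j)`. -/
def embed {n : ℕ} (γ : ℝ) (P : Matrix (Fin n) (Fin n) ℝ) (r : Fin n → ℝ) (j : Fin n)
    (A : Matrix (TwoN n) (TwoN n) ℝ) (u : Matrix Unit (TwoN n) ℝ) :
    ℕ → Matrix (RIdx n) (CIdx n) ℝ
  | 0 => prompt γ P r j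
  | l + 1 => attnLayer n (Pmat n u) (Qmat n A) (embed γ P r j A u l)

/-- Looped `L`-layer transformer output `F_L^{(j)}(A, u) = -(Z_L)_{2n+1, n+1}`. -/
def tfOut {n : ℕ} (γ : ℝ) (P : Matrix (Fin n) (Fin n) ℝ) (r : Fin n → ℝ) (j : Fin n)
    (A : Matrix (TwoN n) (TwoN n) ℝ) (u : Matrix Unit (TwoN n) ℝ) (L : ℕ) : ℝ :=
  -(embed γ P r j A u L (Sum.inr ()) (Sum.inr ()))

/-- `TF_L(Z_0(j); θ_L^TD)`: the transformer output with the TD parameters. -/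
def tfTD {n : ℕ} (γ : ℝ) (P : Matrix (Fin n) (Fin n) ℝ) (r : Fin n → ℝ) (j : Fin n) (L : ℕ) : ℝ :=
  tfOut γ P r j (Atd n) 0 L

/-- `X ∈ ℝ^{2n×n}`: the `i`-th column is `(e_i, γ Pᵀ e_i)`. -/
def Xmat {n : ℕ} (γ : ℝ) (P : Matrix (Fin n) (Fin n) ℝ) : Matrix (TwoN n) (Fin n) ℝ :=
  fun p i => match p with
  | Sum.inl k => if k = i then 1 else 0
  | Sum.inr k => γ * P i k

/-- The query vector `x^q = (e_ω, 0) ∈ ℝ^{2n}`. -/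
def xqv {n : ℕ} (ω : Fin n) : TwoN n → ℝ := fun p =>
  match p with
  | Sum.inl k => if k = ω then 1 else 0
  | Sum.inr _ => 0

/-- Operator norm induced by the ℓ1 vector norm: maximum absolute column sum. -/
def matL1 {m k : Type*} [Fintype m] [Fintype k] (B : Matrix m k ℝ) : ℝ :=
  ⨆ j, ∑ i, |B i j|

/-- `G_0^{(i)} = 0`, `G_{l+1}^{(i)} = X (r - w_l) (X e_i)ᵀ + γ Σ_j P_{ij} G_l^{(j)}`. -/
def Gseq {n : ℕ} (γ : ℝ) (P : Matrix (Fin n) (Fin n) ℝ) (r : Fin n → ℝ) :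
    ℕ → Fin n → Matrix (TwoN n) (TwoN n) ℝ
  | 0 => fun _ => 0
  | l + 1 => fun i =>
      Matrix.vecMulVec ((Xmat γ P).mulVec (r - tdW γ P r l)) ((Xmat γ P).mulVec (Pi.single i 1))
        + γ • ∑ j, P i j • Gseq γ P r l j

/-- `H_0 = 0`, `H_{l+1} = H_l + X (r - w_l) (x^q)ᵀ - G_l^{(ω)}`. -/
def Hseq {n : ℕ} (γ : ℝ) (P : Matrix (Fin n) (Fin n) ℝ) (r : Fin n → ℝ) (ω : Fin n) :
    ℕ → Matrix (TwoN n) (TwoN n) ℝ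
  | 0 => 0
  | l + 1 => Hseq γ P r ω l
      + Matrix.vecMulVec ((Xmat γ P).mulVec (r - tdW γ P r l)) (xqv ω)
      - Gseq γ P r l ω

/-- `U_0 = 0`, `U_{l+1} = X Xᵀ A^TD X + γ U_l Pᵀ`. -/
def Useq {n : ℕ} (γ : ℝ) (P : Matrix (Fin n) (Fin n) ℝ) : ℕ → Matrix (TwoN n) (Fin n) ℝ
  | 0 => 0
  | l + 1 => Xmat γ P * (Xmat γ P)ᵀ * Atd n * Xmat γ P + γ • (Useq γ P l * Pᵀ)

/-- `h_0 = 0`, `h_{l+1} = h_l + X Xᵀ A^TD x^q + U_l Xᵀ A^TD x^q`. -/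
def hseq {n : ℕ} (γ : ℝ) (P : Matrix (Fin n) (Fin n) ℝ) (ω : Fin n) : ℕ → TwoN n → ℝ
  | 0 => 0
  | l + 1 => hseq γ P ω l
      + (Xmat γ P * (Xmat γ P)ᵀ * Atd n).mulVec (xqv ω)
      + (Useq γ P l * (Xmat γ P)ᵀ * Atd n).mulVec (xqv ω)

/-- `g_L(j)`: the vector of all partial derivatives of `F_L^{(j)}` with respect to the
entries of `A` and of `u`, evaluated at the TD parameters `(A^TD, 0)`. -/
def gvec {n : ℕ} (γ : ℝ) (P : Matrix (Fin n) (Fin n) ℝ) (r : Fin n → ℝ) (L : ℕ) (j : Fin n) :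
    (TwoN n × TwoN n) ⊕ TwoN n → ℝ
  | Sum.inl ab => deriv (fun t : ℝ =>
      tfOut γ P r j (Atd n + t • Matrix.single ab.1 ab.2 1) 0 L) 0
  | Sum.inr k => deriv (fun t : ℝ =>
      tfOut γ P r j (Atd n) (t • Matrix.single () k 1) L) 0


namespace Stmt15Aux

variable {n : ℕ}

/-- Top block of the prompt, as a function. -/
def Xt (γ : ℝ) (P : Matrix (Fin n) (Fin n) ℝ) (ω : Fin n) : TwoN n → CIdx n → ℝ :=
  fun p c => match p, c with
  | Sum.inl k, Sum.inl i => if k = i then 1 else 0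
  | Sum.inr k, Sum.inl i => γ * P i k
  | Sum.inl k, Sum.inr _ => if k = ω then 1 else 0
  | Sum.inr _, Sum.inr _ => 0

lemma prompt_top (γ : ℝ) (P : Matrix (Fin n) (Fin n) ℝ) (r : Fin n → ℝ) (ω : Fin n)
    (p : TwoN n) (c : CIdx n) :
    prompt γ P r ω (Sum.inl p) c = Xt γ P ω p c := by
  rcases p with k | k <;> rcases c with i | i <;> rfl

lemma Pmat_mul_top (u : Matrix Unit (TwoN n) ℝ) (W : Matrix (RIdx n) (CIdx n) ℝ)
    (p : TwoN n) (c : CIdx n) : (Pmat n u * W) (Sum.inl p) c = 0 := by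
  simp [Matrix.mul_apply, Pmat, Fintype.sum_sum_type, Matrix.fromBlocks]

lemma Pmat_mul_bot (u : Matrix Unit (TwoN n) ℝ) (W : Matrix (RIdx n) (CIdx n) ℝ)
    (c : CIdx n) :
    (Pmat n u * W) (Sum.inr ()) c = (∑ k, u () k * W (Sum.inl k) c) + W (Sum.inr ()) c := by
  simp [Matrix.mul_apply, Pmat, Fintype.sum_sum_type, Matrix.fromBlocks]

/-- `embed`'s top rows are constant. -/
lemma embed_top (γ : ℝ) (P : Matrix (Fin n) (Fin n) ℝ) (r : Fin n → ℝ) (ω : Fin n)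
    (A : Matrix (TwoN n) (TwoN n) ℝ) (u : Matrix Unit (TwoN n) ℝ) (l : ℕ)
    (p : TwoN n) (c : CIdx n) :
    embed γ P r ω A u l (Sum.inl p) c = Xt γ P ω p c := by
  induction l with
  | zero => exact prompt_top γ P r ω p c
  | succ l ih =>
      show attnLayer n _ _ _ _ _ = _
      rw [attnLayer, Matrix.add_apply, Matrix.mul_assoc, Matrix.mul_assoc,
        Pmat_mul_top, add_zero]
      exact ih

/-- quadratic form `X̃ᵀ A X̃`. -/
def SA (γ : ℝ) (P : Matrix (Fin n) (Fin n) ℝ) (ω : Fin n)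
    (A : Matrix (TwoN n) (TwoN n) ℝ) : CIdx n → CIdx n → ℝ :=
  fun c c' => ∑ p, ∑ q, Xt γ P ω p c * A p q * Xt γ P ω q c'

lemma Qmat_mul_top (A : Matrix (TwoN n) (TwoN n) ℝ) (W : Matrix (RIdx n) (CIdx n) ℝ)
    (p : TwoN n) (c : CIdx n) :
    (Qmat n A * W) (Sum.inl p) c = ∑ q : TwoN n, A p q * W (Sum.inl q) c := by
  simp [Matrix.mul_apply, Qmat, Fintype.sum_sum_type, Matrix.fromBlocks]

lemma Qmat_mul_bot (A : Matrix (TwoN n) (TwoN n) ℝ) (W : Matrix (RIdx n) (CIdx n) ℝ)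
    (u : Unit) (c : CIdx n) : (Qmat n A * W) (Sum.inr u) c = 0 := by
  simp [Matrix.mul_apply, Qmat, Fintype.sum_sum_type, Matrix.fromBlocks]

lemma quad_eq (γ : ℝ) (P : Matrix (Fin n) (Fin n) ℝ) (r : Fin n → ℝ) (ω : Fin n)
    (A : Matrix (TwoN n) (TwoN n) ℝ) (u : Matrix Unit (TwoN n) ℝ) (l : ℕ)
    (c c' : CIdx n) :
    ((embed γ P r ω A u l)ᵀ * Qmat n A * embed γ P r ω A u l) c c' = SA γ P ω A c c' := by
  rw [Matrix.mul_assoc, Matrix.mul_apply, Fintype.sum_sum_type]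
  simp only [Matrix.transpose_apply, Qmat_mul_top, Qmat_mul_bot, mul_zero,
    Finset.sum_const_zero, add_zero, embed_top, SA, Finset.mul_sum]
  exact Finset.sum_congr rfl fun p _ => Finset.sum_congr rfl fun q _ => by
    rw [← mul_assoc]

/-- Master recursion for the bottom row of `embed`. -/
lemma embed_bot (γ : ℝ) (P : Matrix (Fin n) (Fin n) ℝ) (r : Fin n → ℝ) (ω : Fin n)
    (A : Matrix (TwoN n) (TwoN n) ℝ) (u : Matrix Unit (TwoN n) ℝ) (l : ℕ) (c : CIdx n) :
    embed γ P r ω A u (l + 1) (Sum.inr ()) c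
      = embed γ P r ω A u l (Sum.inr ()) c
        + ∑ i : Fin n,
            ((∑ k, u () k * Xt γ P ω k (Sum.inl i))
              + embed γ P r ω A u l (Sum.inr ()) (Sum.inl i)) * SA γ P ω A (Sum.inl i) c := by
  set Z := embed γ P r ω A u l with hZ
  show (attnLayer n (Pmat n u) (Qmat n A) Z) (Sum.inr ()) c = _
  rw [attnLayer, Matrix.add_apply]
  congr 1
  rw [Matrix.mul_assoc, Matrix.mul_assoc, Pmat_mul_bot]
  have key : ∀ p : RIdx n, (Z * (maskM n * (Zᵀ * Qmat n A * Z))) p c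
      = ∑ i : Fin n, Z p (Sum.inl i) * SA γ P ω A (Sum.inl i) c := by
    intro p
    rw [← Matrix.mul_assoc, Matrix.mul_apply, Fintype.sum_sum_type]
    have h2 : ∀ c' : CIdx n, (Z * maskM n) p c' = match c' with
        | Sum.inl i => Z p (Sum.inl i) | Sum.inr _ => 0 := by
      intro c'
      rcases c' with i | i <;>
        simp [Matrix.mul_apply, maskM, Fintype.sum_sum_type, Matrix.fromBlocks,
          Matrix.one_apply]
    simp only [h2]
    simp only [zero_mul, Finset.sum_const_zero, add_zero]
    exact Finset.sum_congr rfl fun i _ => by rw [quad_eq]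
  simp only [key]
  have htop : ∀ (k : TwoN n) (i : Fin n), Z (Sum.inl k) (Sum.inl i) = Xt γ P ω k (Sum.inl i) :=
    fun k i => embed_top γ P r ω A u l k (Sum.inl i)
  simp only [htop, Finset.mul_sum]
  rw [Finset.sum_comm, ← Finset.sum_add_distrib]
  refine Finset.sum_congr rfl fun i _ => ?_
  rw [add_mul, Finset.sum_mul]
  refine congrArg₂ (· + ·) (Finset.sum_congr rfl fun k _ => ?_) rfl
  ring


lemma SA_add_smul (γ : ℝ) (P : Matrix (Fin n) (Fin n) ℝ) (ω : Fin n)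
    (E : Matrix (TwoN n) (TwoN n) ℝ) (t : ℝ) (c c' : CIdx n) :
    SA γ P ω (Atd n + t • E) c c'
      = SA γ P ω (Atd n) c c' + t * SA γ P ω E c c' := by
  simp only [SA, Matrix.add_apply, Matrix.smul_apply, smul_eq_mul, mul_add, add_mul,
    Finset.sum_add_distrib, Finset.mul_sum]
  congr 1
  exact Finset.sum_congr rfl fun p _ => Finset.sum_congr rfl fun q _ => by ring

lemma SA_std (γ : ℝ) (P : Matrix (Fin n) (Fin n) ℝ) (ω : Fin n)
    (a b : TwoN n) (c c' : CIdx n) :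
    SA γ P ω (Matrix.single a b 1) c c' = Xt γ P ω a c * Xt γ P ω b c' := by
  simp [SA, Matrix.single, ite_and, mul_ite, ite_mul, zero_mul, mul_zero,
    Finset.sum_ite_eq, Finset.sum_ite_eq']

lemma Sd_apply (γ : ℝ) (P : Matrix (Fin n) (Fin n) ℝ) (ω : Fin n) (i : Fin n) (c : CIdx n) :
    SA γ P ω (Atd n) (Sum.inl i) c
      = -Xt γ P ω (Sum.inl i) c + Xt γ P ω (Sum.inr i) c := by
  simp only [SA, Fintype.sum_sum_type, Atd, Matrix.fromBlocks_apply₁₁,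
    Matrix.fromBlocks_apply₁₂, Matrix.fromBlocks_apply₂₁, Matrix.fromBlocks_apply₂₂,
    Matrix.zero_apply, mul_zero, zero_mul, Finset.sum_const_zero, add_zero,
    Matrix.neg_apply, Matrix.one_apply]
  have hXl : ∀ a : Fin n, Xt γ P ω (Sum.inl a) (Sum.inl i) = if a = i then 1 else 0 := by
    intro a; rfl
  simp only [hXl]
  rw [Finset.sum_eq_single i]
  · simp [Finset.sum_ite_eq, mul_ite, ite_mul, zero_mul, mul_zero, neg_mul]
  · intro a _ ha
    simp [ha]
  · simp

/-- bottom row of `embed` at the TD parameters. -/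
def zTD (γ : ℝ) (P : Matrix (Fin n) (Fin n) ℝ) (r : Fin n → ℝ) (ω : Fin n)
    (l : ℕ) (c : CIdx n) : ℝ :=
  embed γ P r ω (Atd n) 0 l (Sum.inr ()) c

/-- directional derivative sequence for an `A`-direction `stdBasisMatrix a b 1`. -/
def dA (γ : ℝ) (P : Matrix (Fin n) (Fin n) ℝ) (r : Fin n → ℝ) (ω : Fin n)
    (a b : TwoN n) : ℕ → CIdx n → ℝ
  | 0 => fun _ => 0
  | l + 1 => fun c => dA γ P r ω a b l c
      + ∑ i : Fin n, (dA γ P r ω a b l (Sum.inl i) * SA γ P ω (Atd n) (Sum.inl i) c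
          + zTD γ P r ω l (Sum.inl i) * (Xt γ P ω a (Sum.inl i) * Xt γ P ω b c))

/-- directional derivative sequence for a `u`-direction `stdBasisMatrix () k 1`. -/
def dU (γ : ℝ) (P : Matrix (Fin n) (Fin n) ℝ) (r : Fin n → ℝ) (ω : Fin n)
    (k : TwoN n) : ℕ → CIdx n → ℝ
  | 0 => fun _ => 0
  | l + 1 => fun c => dU γ P r ω k l c
      + ∑ i : Fin n, ((Xt γ P ω k (Sum.inl i) + dU γ P r ω k l (Sum.inl i))
          * SA γ P ω (Atd n) (Sum.inl i) c)

lemma hasDerivA (γ : ℝ) (P : Matrix (Fin n) (Fin n) ℝ) (r : Fin n → ℝ) (ω : Fin n)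
    (a b : TwoN n) (l : ℕ) : ∀ c : CIdx n,
    HasDerivAt (fun t : ℝ =>
      embed γ P r ω (Atd n + t • Matrix.single a b 1) 0 l (Sum.inr ()) c)
      (dA γ P r ω a b l c) 0 := by
  induction l with
  | zero =>
      intro c
      show HasDerivAt (fun _ : ℝ => prompt γ P r ω (Sum.inr ()) c) ((fun _ => (0:ℝ)) c) 0
      exact hasDerivAt_const 0 _
  | succ l ih =>
      intro c
      have hfun : (fun t : ℝ =>
            embed γ P r ω (Atd n + t • Matrix.single a b 1) 0 (l+1) (Sum.inr ()) c)
          = fun t : ℝ =>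
            embed γ P r ω (Atd n + t • Matrix.single a b 1) 0 l (Sum.inr ()) c
            + ∑ i : Fin n,
                (embed γ P r ω (Atd n + t • Matrix.single a b 1) 0 l (Sum.inr ())
                    (Sum.inl i))
                * (SA γ P ω (Atd n) (Sum.inl i) c
                    + t * SA γ P ω (Matrix.single a b 1) (Sum.inl i) c) := by
        funext t
        rw [embed_bot]
        simp only [SA_add_smul, Matrix.zero_apply, zero_mul, Finset.sum_const_zero, zero_add]
      rw [hfun]
      have H := (ih c).add (HasDerivAt.sum (u := Finset.univ) (fun i _ =>
        ((ih (Sum.inl i)).mul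
          (((hasDerivAt_id (0:ℝ)).mul_const
              (SA γ P ω (Matrix.single a b 1) (Sum.inl i) c)).const_add
            (SA γ P ω (Atd n) (Sum.inl i) c)))))
      convert H using 1
      show dA γ P r ω a b (l+1) c = _
      simp only [dA, id_eq, zero_mul, zero_add, one_mul, zero_smul, add_zero, zTD]
      simp only [SA_std]
      · rfl
      · rfl
      · funext t; simp [Finset.sum_apply]

lemma hasDerivU (γ : ℝ) (P : Matrix (Fin n) (Fin n) ℝ) (r : Fin n → ℝ) (ω : Fin n)
    (k : TwoN n) (l : ℕ) : ∀ c : CIdx n,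
    HasDerivAt (fun t : ℝ =>
      embed γ P r ω (Atd n) (t • Matrix.single () k 1) l (Sum.inr ()) c)
      (dU γ P r ω k l c) 0 := by
  induction l with
  | zero =>
      intro c
      show HasDerivAt (fun _ : ℝ => prompt γ P r ω (Sum.inr ()) c) ((fun _ => (0:ℝ)) c) 0
      exact hasDerivAt_const 0 _
  | succ l ih =>
      intro c
      have hstd : ∀ (t : ℝ) (i : Fin n),
          (∑ k', (t • Matrix.single () k 1) () k' * Xt γ P ω k' (Sum.inl i))
            = t * Xt γ P ω k (Sum.inl i) := by
        intro t i
        simp [Matrix.single, ite_and, mul_ite, ite_mul, zero_mul, mul_zero,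
          Finset.sum_ite_eq, Finset.mul_sum]
      have hfun : (fun t : ℝ =>
            embed γ P r ω (Atd n) (t • Matrix.single () k 1) (l+1) (Sum.inr ()) c)
          = fun t : ℝ =>
            embed γ P r ω (Atd n) (t • Matrix.single () k 1) l (Sum.inr ()) c
            + ∑ i : Fin n,
                (t * Xt γ P ω k (Sum.inl i)
                  + embed γ P r ω (Atd n) (t • Matrix.single () k 1) l (Sum.inr ())
                      (Sum.inl i)) * SA γ P ω (Atd n) (Sum.inl i) c := by
        funext t
        rw [embed_bot]
        simp only [hstd]
      rw [hfun]
      have H := (ih c).add (HasDerivAt.sum (u := Finset.univ) (fun i _ =>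
        ((((hasDerivAt_id (0:ℝ)).mul_const (Xt γ P ω k (Sum.inl i))).add
            (ih (Sum.inl i))).mul_const (SA γ P ω (Atd n) (Sum.inl i) c))))
      convert H using 1
      show dU γ P r ω k (l+1) c = _
      simp only [dU, one_mul]
      · rfl
      · rfl
      · funext t; simp [Finset.sum_apply]

section Bounds
variable {γ : ℝ} {P : Matrix (Fin n) (Fin n) ℝ} {r : Fin n → ℝ} {ω : Fin n}

lemma P_le_one (hP : RowStochastic P) (i j : Fin n) : P i j ≤ 1 := by
  have h := Finset.single_le_sum (f := fun k => P i k) (fun k _ => hP.1 i k)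
    (Finset.mem_univ j)
  rw [hP.2 i] at h
  exact h

lemma value_eq (hn : 1 ≤ n) (hγ0 : 0 ≤ γ) (hγ1 : γ < 1) (hP : RowStochastic P) :
    ∀ i, r i = valueV γ P r i - γ * (P.mulVec (valueV γ P r)) i := by
  set B : Matrix (Fin n) (Fin n) ℝ := (1 : Matrix (Fin n) (Fin n) ℝ) - γ • P with hB
  have hdet : IsUnit B.det := by
    rw [isUnit_iff_ne_zero]
    intro hdet0
    obtain ⟨x, hx0, hx⟩ := (Matrix.exists_mulVec_eq_zero_iff).2 hdet0
    have hmv : ∀ (M : Matrix (Fin n) (Fin n) ℝ) (y : Fin n → ℝ) (i : Fin n),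
        (M.mulVec y) i = ∑ j, M i j * y j := fun _ _ _ => rfl
    have hxi : ∀ i, x i = γ * (P.mulVec x) i := by
      intro i
      have := congrFun hx i
      simp only [hB, Matrix.sub_mulVec, Matrix.one_mulVec, Matrix.smul_mulVec,
        Pi.sub_apply, Pi.smul_apply, smul_eq_mul, Pi.zero_apply, sub_eq_zero] at this
      exact this
    have : Nonempty (Fin n) := ⟨⟨0, hn⟩⟩
    obtain ⟨i₀, hi₀⟩ := Finite.exists_max (fun i => |x i|)
    have hm0 : 0 ≤ |x i₀| := abs_nonneg _
    have hle : |x i₀| ≤ γ * |x i₀| := by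
      calc |x i₀| = γ * |(P.mulVec x) i₀| := by rw [hxi i₀, abs_mul, abs_of_nonneg hγ0]
        _ ≤ γ * |x i₀| := by
            refine mul_le_mul_of_nonneg_left ?_ hγ0
            calc |(P.mulVec x) i₀| ≤ ∑ j, |P i₀ j * x j| := by
                  rw [hmv]; exact Finset.abs_sum_le_sum_abs _ _
              _ ≤ ∑ j, P i₀ j * |x i₀| := by
                  refine Finset.sum_le_sum fun j _ => ?_
                  rw [abs_mul, abs_of_nonneg (hP.1 i₀ j)]
                  exact mul_le_mul_of_nonneg_left (hi₀ j) (hP.1 i₀ j)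
              _ = |x i₀| := by rw [← Finset.sum_mul, hP.2 i₀, one_mul]
    have hx0' : |x i₀| = 0 := by nlinarith
    apply hx0
    funext j
    have := hi₀ j
    have : |x j| ≤ 0 := hx0' ▸ this
    simpa using le_antisymm this (abs_nonneg _)
  have hmul : B.mulVec (valueV γ P r) = r := by
    rw [valueV, ← hB, Matrix.mulVec_mulVec, Matrix.mul_nonsing_inv _ hdet, Matrix.one_mulVec]
  intro i
  have := congrFun hmul i
  rw [← this]
  simp [hB, Matrix.sub_mulVec, Matrix.one_mulVec, Matrix.smul_mulVec]

/-- the constant `V = (1+γ)‖v‖`. -/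
def Vc (γ : ℝ) (P : Matrix (Fin n) (Fin n) ℝ) (r : Fin n → ℝ) : ℝ :=
  (1 + γ) * ‖valueV γ P r‖

/-- per-index entry bound of `X̃`. -/
def Bb (γ : ℝ) : TwoN n → ℝ := Sum.elim (fun _ => 1) (fun _ => γ)

/-- column-sum of the `a`-th row of `X`. -/
def Aa (γ : ℝ) (P : Matrix (Fin n) (Fin n) ℝ) (ω : Fin n) : TwoN n → ℝ :=
  fun a => ∑ i, |Xt γ P ω a (Sum.inl i)|

lemma Vc_nonneg (hγ0 : 0 ≤ γ) : 0 ≤ Vc γ P r :=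
  mul_nonneg (by linarith) (norm_nonneg _)

lemma Bb_nonneg (hγ0 : 0 ≤ γ) (k : TwoN n) : 0 ≤ Bb γ k := by
  rcases k with k | k <;> simp [Bb, hγ0]

lemma Bb_le_one (hγ0 : 0 ≤ γ) (hγ1 : γ < 1) (k : TwoN n) : Bb γ k ≤ 1 := by
  rcases k with k | k <;> simp [Bb] <;> linarith

lemma Aa_nonneg : 0 ≤ Aa γ P ω a :=
  Finset.sum_nonneg fun i _ => abs_nonneg _

lemma Xt_bound (hγ0 : 0 ≤ γ) (hP : RowStochastic P) (b : TwoN n) (c : CIdx n) :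
    |Xt γ P ω b c| ≤ Bb γ b := by
  rcases b with k | k <;> rcases c with i | i
  · show |if k = i then (1:ℝ) else 0| ≤ 1
    split <;> simp
  · show |if k = ω then (1:ℝ) else 0| ≤ 1
    split <;> simp
  · show |γ * P i k| ≤ γ
    rw [abs_mul, abs_of_nonneg hγ0, abs_of_nonneg (hP.1 i k)]
    nlinarith [P_le_one hP i k, hP.1 i k]
  · show |(0:ℝ)| ≤ γ
    simpa using hγ0

lemma r_bound (hn : 1 ≤ n) (hγ0 : 0 ≤ γ) (hγ1 : γ < 1) (hP : RowStochastic P) (i : Fin n) :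
    |r i| ≤ Vc γ P r := by
  rw [value_eq (r := r) hn hγ0 hγ1 hP i]
  have hv : ∀ j, |valueV γ P r j| ≤ ‖valueV γ P r‖ := fun j => by
    simpa [Real.norm_eq_abs] using norm_le_pi_norm (valueV γ P r) j
  have hPv : |(P.mulVec (valueV γ P r)) i| ≤ ‖valueV γ P r‖ := by
    have hmv : (P.mulVec (valueV γ P r)) i = ∑ j, P i j * valueV γ P r j := rfl
    calc |(P.mulVec (valueV γ P r)) i| ≤ ∑ j, |P i j * valueV γ P r j| := by
          rw [hmv]; exact Finset.abs_sum_le_sum_abs _ _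
      _ ≤ ∑ j, P i j * ‖valueV γ P r‖ := by
          refine Finset.sum_le_sum fun j _ => ?_
          rw [abs_mul, abs_of_nonneg (hP.1 i j)]
          exact mul_le_mul_of_nonneg_left (hv j) (hP.1 i j)
      _ = ‖valueV γ P r‖ := by rw [← Finset.sum_mul, hP.2 i, one_mul]
  have htri : |valueV γ P r i - γ * (P.mulVec (valueV γ P r)) i|
      ≤ |valueV γ P r i| + |γ * (P.mulVec (valueV γ P r)) i| := by
    rw [sub_eq_add_neg]
    exact (abs_add_le _ _).trans (by rw [abs_neg])
  rw [abs_mul, abs_of_nonneg hγ0] at htri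
  have hvi := hv i
  have := norm_nonneg (valueV γ P r)
  rw [Vc]
  nlinarith

/-- the cancellation identity `f i' + ∑ f i (-δ + g i) = ∑ f i g i`. -/
lemma cancel_sum (f g : Fin n → ℝ) (i' : Fin n) :
    f i' + ∑ i, f i * (-(if i = i' then 1 else 0) + g i) = ∑ i, f i * g i := by
  have : ∀ i, f i * (-(if i = i' then 1 else 0) + g i)
      = -(if i = i' then f i else 0) + f i * g i := by
    intro i; split <;> ring
  simp only [this, Finset.sum_add_distrib, Finset.sum_neg_distrib]
  rw [Finset.sum_ite_eq' Finset.univ i' f]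
  simp

/-- stochastic row bound. -/
lemma row_bound (hγ0 : 0 ≤ γ) (hP : RowStochastic P) {C : ℝ} (hC : 0 ≤ C)
    {f : Fin n → ℝ} (hf : ∀ i, |f i| ≤ C) (i' : Fin n) :
    |∑ i, f i * (γ * P i' i)| ≤ γ * C := by
  calc |∑ i, f i * (γ * P i' i)| ≤ ∑ i, |f i * (γ * P i' i)| := Finset.abs_sum_le_sum_abs _ _
    _ ≤ ∑ i, C * (γ * P i' i) := by
        refine Finset.sum_le_sum fun i _ => ?_
        rw [abs_mul, abs_mul, abs_of_nonneg hγ0, abs_of_nonneg (hP.1 i' i)]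
        exact mul_le_mul_of_nonneg_right (hf i) (mul_nonneg hγ0 (hP.1 i' i))
    _ = γ * C := by
        rw [← Finset.mul_sum, ← Finset.mul_sum, hP.2 i']
        ring

end Bounds

section Seqs
variable {γ : ℝ} {P : Matrix (Fin n) (Fin n) ℝ} {r : Fin n → ℝ} {ω : Fin n}

lemma Xt_ll (k i : Fin n) : Xt γ P ω (Sum.inl k) (Sum.inl i) = if k = i then 1 else 0 := rfl
lemma Xt_rl (k i : Fin n) : Xt γ P ω (Sum.inr k) (Sum.inl i) = γ * P i k := rfl
lemma Xt_lq (k : Fin n) (u : Unit) :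
    Xt γ P ω (Sum.inl k) (Sum.inr u) = if k = ω then 1 else 0 := rfl
lemma Xt_rq (k : Fin n) (u : Unit) : Xt γ P ω (Sum.inr k) (Sum.inr u) = 0 := rfl

lemma pick_sum (f : Fin n → ℝ) (ω : Fin n) :
    ∑ i, f i * (-(if i = ω then 1 else 0) + 0) = -f ω := by
  have : ∀ i : Fin n, f i * (-(if i = ω then 1 else 0) + 0)
      = -(if i = ω then f i else 0) := by intro i; split <;> ring
  simp only [this]
  rw [Finset.sum_neg_distrib, Finset.sum_ite_eq' Finset.univ ω f]
  simp

lemma zTD_step (l : ℕ) (i' : Fin n) :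
    zTD γ P r ω (l+1) (Sum.inl i') = ∑ i, zTD γ P r ω l (Sum.inl i) * (γ * P i' i) := by
  show embed γ P r ω (Atd n) 0 (l+1) (Sum.inr ()) (Sum.inl i') = _
  rw [embed_bot]
  simp only [Matrix.zero_apply, zero_mul, Finset.sum_const_zero, zero_add, Sd_apply,
    Xt_ll, Xt_rl]
  exact cancel_sum (fun i => embed γ P r ω (Atd n) 0 l (Sum.inr ()) (Sum.inl i))
    (fun i => γ * P i' i) i'

lemma zTD_bound (hn : 1 ≤ n) (hγ0 : 0 ≤ γ) (hγ1 : γ < 1) (hP : RowStochastic P) :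
    ∀ (l : ℕ) (i : Fin n), |zTD γ P r ω l (Sum.inl i)| ≤ Vc γ P r := by
  intro l
  induction l with
  | zero => exact fun i => r_bound hn hγ0 hγ1 hP i
  | succ l ih =>
      intro i'
      rw [zTD_step]
      have h := row_bound hγ0 hP (Vc_nonneg (r := r) hγ0) ih i'
      have := Vc_nonneg (γ := γ) (P := P) (r := r) hγ0
      nlinarith

lemma dU_step_inl (k : TwoN n) (l : ℕ) (i' : Fin n) :
    Xt γ P ω k (Sum.inl i') + dU γ P r ω k (l+1) (Sum.inl i')
      = ∑ i, (Xt γ P ω k (Sum.inl i) + dU γ P r ω k l (Sum.inl i)) * (γ * P i' i) := by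
  simp only [dU, Sd_apply, Xt_ll, Xt_rl]
  rw [← add_assoc]
  exact cancel_sum (fun i => Xt γ P ω k (Sum.inl i) + dU γ P r ω k l (Sum.inl i))
    (fun i => γ * P i' i) i'

lemma dU_step_q (k : TwoN n) (l : ℕ) :
    dU γ P r ω k (l+1) (Sum.inr ())
      = dU γ P r ω k l (Sum.inr ())
        - (Xt γ P ω k (Sum.inl ω) + dU γ P r ω k l (Sum.inl ω)) := by
  simp only [dU, Sd_apply, Xt_lq, Xt_rq]
  rw [pick_sum (fun i => Xt γ P ω k (Sum.inl i) + dU γ P r ω k l (Sum.inl i)) ω]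
  ring

lemma dU_m_bound (hγ0 : 0 ≤ γ) (hγ1 : γ < 1) (hP : RowStochastic P) (k : TwoN n) :
    ∀ (l : ℕ) (i : Fin n),
      |Xt γ P ω k (Sum.inl i) + dU γ P r ω k l (Sum.inl i)| ≤ Bb γ k := by
  intro l
  induction l with
  | zero =>
      intro i
      simpa [dU] using Xt_bound (ω := ω) hγ0 hP k (Sum.inl i)
  | succ l ih =>
      intro i'
      rw [dU_step_inl]
      have h := row_bound hγ0 hP (Bb_nonneg hγ0 k) ih i'
      have h2 := Bb_nonneg (n := n) hγ0 k
      nlinarith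

lemma dU_q_bound (hγ0 : 0 ≤ γ) (hγ1 : γ < 1) (hP : RowStochastic P) (k : TwoN n) :
    ∀ l : ℕ, |dU γ P r ω k l (Sum.inr ())| ≤ (l : ℝ) * Bb γ k := by
  intro l
  induction l with
  | zero => simp [dU]
  | succ l ih =>
      rw [dU_step_q]
      have h2 := dU_m_bound (ω := ω) (r := r) hγ0 hγ1 hP k l ω
      have htri : |dU γ P r ω k l (Sum.inr ())
            - (Xt γ P ω k (Sum.inl ω) + dU γ P r ω k l (Sum.inl ω))|
          ≤ |dU γ P r ω k l (Sum.inr ())|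
            + |Xt γ P ω k (Sum.inl ω) + dU γ P r ω k l (Sum.inl ω)| := by
        rw [sub_eq_add_neg]
        exact (abs_add_le _ _).trans (by rw [abs_neg])
      push_cast
      linarith

lemma cl_bound (hn : 1 ≤ n) (hγ0 : 0 ≤ γ) (hγ1 : γ < 1) (hP : RowStochastic P)
    (a : TwoN n) (l : ℕ) :
    |∑ i, zTD γ P r ω l (Sum.inl i) * Xt γ P ω a (Sum.inl i)| ≤ Vc γ P r * Aa γ P ω a := by
  calc |∑ i, zTD γ P r ω l (Sum.inl i) * Xt γ P ω a (Sum.inl i)|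
      ≤ ∑ i, |zTD γ P r ω l (Sum.inl i)| * |Xt γ P ω a (Sum.inl i)| := by
        refine (Finset.abs_sum_le_sum_abs _ _).trans ?_
        refine Finset.sum_le_sum fun i _ => ?_
        rw [abs_mul]
    _ ≤ ∑ i, Vc γ P r * |Xt γ P ω a (Sum.inl i)| := by
        refine Finset.sum_le_sum fun i _ => ?_
        exact mul_le_mul_of_nonneg_right (zTD_bound hn hγ0 hγ1 hP l i) (abs_nonneg _)
    _ = Vc γ P r * Aa γ P ω a := by rw [Aa, Finset.mul_sum]

lemma dA_step_inl (a b : TwoN n) (l : ℕ) (i' : Fin n) :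
    dA γ P r ω a b (l+1) (Sum.inl i')
      = ∑ i, dA γ P r ω a b l (Sum.inl i) * (γ * P i' i)
        + (∑ i, zTD γ P r ω l (Sum.inl i) * Xt γ P ω a (Sum.inl i))
            * Xt γ P ω b (Sum.inl i') := by
  simp only [dA, Sd_apply, Xt_ll, Xt_rl, Finset.sum_add_distrib]
  rw [← add_assoc]
  congr 1
  · exact cancel_sum (fun i => dA γ P r ω a b l (Sum.inl i)) (fun i => γ * P i' i) i'
  · rw [Finset.sum_mul]
    exact Finset.sum_congr rfl fun i _ => by ring

lemma dA_step_q (a b : TwoN n) (l : ℕ) :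
    dA γ P r ω a b (l+1) (Sum.inr ())
      = dA γ P r ω a b l (Sum.inr ()) - dA γ P r ω a b l (Sum.inl ω)
        + (∑ i, zTD γ P r ω l (Sum.inl i) * Xt γ P ω a (Sum.inl i))
            * Xt γ P ω b (Sum.inr ()) := by
  simp only [dA, Sd_apply, Xt_lq, Xt_rq, Finset.sum_add_distrib]
  rw [pick_sum (fun i => dA γ P r ω a b l (Sum.inl i)) ω, Finset.sum_mul,
    sub_eq_add_neg, add_assoc]
  congr 1
  congr 1
  exact Finset.sum_congr rfl fun i _ => (mul_assoc _ _ _).symm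

lemma dA_inl_bound (hn : 1 ≤ n) (hγ0 : 0 ≤ γ) (hγ1 : γ < 1) (hP : RowStochastic P)
    (a b : TwoN n) :
    ∀ (l : ℕ) (i : Fin n),
      |dA γ P r ω a b l (Sum.inl i)| ≤ (l : ℝ) * (Vc γ P r * Aa γ P ω a * Bb γ b) := by
  intro l
  induction l with
  | zero => intro i; simp [dA]
  | succ l ih =>
      intro i'
      rw [dA_step_inl]
      set K := Vc γ P r * Aa γ P ω a * Bb γ b with hK
      have hK0 : 0 ≤ K :=
        mul_nonneg (mul_nonneg (Vc_nonneg hγ0) Aa_nonneg) (Bb_nonneg hγ0 b)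
      have hlK : (0:ℝ) ≤ (l:ℝ) * K := mul_nonneg (Nat.cast_nonneg l) hK0
      have h1 := row_bound hγ0 hP hlK ih i'
      have h2 : |(∑ i, zTD γ P r ω l (Sum.inl i) * Xt γ P ω a (Sum.inl i))
          * Xt γ P ω b (Sum.inl i')| ≤ K := by
        rw [abs_mul, hK]
        have := cl_bound (r := r) (ω := ω) hn hγ0 hγ1 hP a l
        have := Xt_bound (ω := ω) hγ0 hP b (Sum.inl i')
        have := Vc_nonneg (γ := γ) (P := P) (r := r) hγ0
        have := Aa_nonneg (γ := γ) (P := P) (ω := ω) (a := a)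
        nlinarith [abs_nonneg (∑ i, zTD γ P r ω l (Sum.inl i) * Xt γ P ω a (Sum.inl i)),
          abs_nonneg (Xt γ P ω b (Sum.inl i'))]
      have htri := abs_add_le (∑ i, dA γ P r ω a b l (Sum.inl i) * (γ * P i' i))
        ((∑ i, zTD γ P r ω l (Sum.inl i) * Xt γ P ω a (Sum.inl i)) * Xt γ P ω b (Sum.inl i'))
      push_cast
      nlinarith

lemma dA_q_bound (hn : 1 ≤ n) (hγ0 : 0 ≤ γ) (hγ1 : γ < 1) (hP : RowStochastic P)
    (a b : TwoN n) :
    ∀ l : ℕ, |dA γ P r ω a b l (Sum.inr ())|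
      ≤ ((l : ℝ) * ((l:ℝ) + 1) / 2) * (Vc γ P r * Aa γ P ω a * Bb γ b) := by
  intro l
  induction l with
  | zero => simp [dA]
  | succ l ih =>
      rw [dA_step_q]
      set K := Vc γ P r * Aa γ P ω a * Bb γ b with hK
      have hK0 : 0 ≤ K :=
        mul_nonneg (mul_nonneg (Vc_nonneg hγ0) Aa_nonneg) (Bb_nonneg hγ0 b)
      have h1 := dA_inl_bound (r := r) (ω := ω) hn hγ0 hγ1 hP a b l ω
      have h2 : |(∑ i, zTD γ P r ω l (Sum.inl i) * Xt γ P ω a (Sum.inl i))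
          * Xt γ P ω b (Sum.inr ())| ≤ K := by
        rw [abs_mul, hK]
        have := cl_bound (r := r) (ω := ω) hn hγ0 hγ1 hP a l
        have := Xt_bound (ω := ω) hγ0 hP b (Sum.inr ())
        have := Vc_nonneg (γ := γ) (P := P) (r := r) hγ0
        have := Aa_nonneg (γ := γ) (P := P) (ω := ω) (a := a)
        nlinarith [abs_nonneg (∑ i, zTD γ P r ω l (Sum.inl i) * Xt γ P ω a (Sum.inl i)),
          abs_nonneg (Xt γ P ω b (Sum.inr ()))]
      have htri : |dA γ P r ω a b l (Sum.inr ()) - dA γ P r ω a b l (Sum.inl ω)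
            + (∑ i, zTD γ P r ω l (Sum.inl i) * Xt γ P ω a (Sum.inl i))
                * Xt γ P ω b (Sum.inr ())|
          ≤ |dA γ P r ω a b l (Sum.inr ())| + |dA γ P r ω a b l (Sum.inl ω)|
            + |(∑ i, zTD γ P r ω l (Sum.inl i) * Xt γ P ω a (Sum.inl i))
                * Xt γ P ω b (Sum.inr ())| := by
        refine (abs_add_le _ _).trans (add_le_add_left ?_ _)
        rw [sub_eq_add_neg]
        exact (abs_add_le _ _).trans (by rw [abs_neg])
      push_cast
      nlinarith

end Seqs

lemma gvec_inl (γ : ℝ) (P : Matrix (Fin n) (Fin n) ℝ) (r : Fin n → ℝ) (ω : Fin n)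
    (L : ℕ) (a b : TwoN n) :
    gvec γ P r L ω (Sum.inl (a, b)) = -(dA γ P r ω a b L (Sum.inr ())) := by
  show deriv (fun t : ℝ =>
      tfOut γ P r ω (Atd n + t • Matrix.single a b 1) 0 L) 0 = _
  exact ((hasDerivA γ P r ω a b L (Sum.inr ())).neg).deriv

lemma gvec_inr (γ : ℝ) (P : Matrix (Fin n) (Fin n) ℝ) (r : Fin n → ℝ) (ω : Fin n)
    (L : ℕ) (k : TwoN n) :
    gvec γ P r L ω (Sum.inr k) = -(dU γ P r ω k L (Sum.inr ())) := by
  show deriv (fun t : ℝ =>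
      tfOut γ P r ω (Atd n) (t • Matrix.single () k 1) L) 0 = _
  exact ((hasDerivU γ P r ω k L (Sum.inr ())).neg).deriv

lemma sum_Bb (γ : ℝ) : ∑ k : TwoN n, Bb γ k = (n : ℝ) * (1 + γ) := by
  rw [Fintype.sum_sum_type]
  simp [Bb]
  ring

lemma sum_Aa {γ : ℝ} {P : Matrix (Fin n) (Fin n) ℝ} {ω : Fin n}
    (hγ0 : 0 ≤ γ) (hP : RowStochastic P) :
    ∑ a : TwoN n, Aa γ P ω a = (n : ℝ) * (1 + γ) := by
  rw [Fintype.sum_sum_type]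
  have h1 : ∀ j : Fin n, Aa γ P ω (Sum.inl j) = 1 := by
    intro j
    rw [Aa]
    simp [Xt_ll, apply_ite (abs : ℝ → ℝ), Finset.sum_ite_eq]
  have h2 : ∑ j, Aa γ P ω (Sum.inr j) = γ * n := by
    have he : ∀ j, Aa γ P ω (Sum.inr j) = ∑ i, γ * P i j := by
      intro j
      rw [Aa]
      refine Finset.sum_congr rfl fun i _ => ?_
      rw [Xt_rl, abs_mul, abs_of_nonneg hγ0, abs_of_nonneg (hP.1 i j)]
    simp only [he]
    rw [Finset.sum_comm]
    have hrow : ∀ i : Fin n, ∑ j, γ * P i j = γ := by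
      intro i
      rw [← Finset.mul_sum, hP.2 i, mul_one]
    simp [hrow, Finset.sum_const, mul_comm]
  rw [h2]
  simp [h1]
  ring

end Stmt15Aux

open Stmt15Aux

/-- Lemma 3: `‖∇F_L^{(ω)}(A^TD, 0)‖_1 ≤ ((L² + L)/2) ν + L ξ` with
`ν = 2n (n(1+γ)²‖v‖_∞ + (1+γ)²)` and `ξ = 2n(1+γ)`. -/
theorem stmt15 (n : ℕ) (hn : 1 ≤ n) (γ : ℝ) (hγ0 : 0 ≤ γ) (hγ1 : γ < 1)
    (P : Matrix (Fin n) (Fin n) ℝ) (hP : RowStochastic P) (r : Fin n → ℝ)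
    (L : ℕ) (ω : Fin n) :
    ∑ idx : (TwoN n × TwoN n) ⊕ TwoN n, |gvec γ P r L ω idx|
      ≤ (((L : ℝ) ^ 2 + L) / 2) *
          (2 * (n : ℝ) * ((n : ℝ) * (1 + γ) ^ 2 * ‖valueV γ P r‖ + (1 + γ) ^ 2))
        + (L : ℝ) * (2 * (n : ℝ) * (1 + γ)) := by
  have hsum : ∑ idx : (TwoN n × TwoN n) ⊕ TwoN n, |gvec γ P r L ω idx|
      = (∑ ab : TwoN n × TwoN n, |dA γ P r ω ab.1 ab.2 L (Sum.inr ())|)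
        + ∑ k : TwoN n, |dU γ P r ω k L (Sum.inr ())| := by
    rw [Fintype.sum_sum_type]
    congr 1
    · refine Finset.sum_congr rfl fun ab _ => ?_
      obtain ⟨a, b⟩ := ab
      rw [gvec_inl, abs_neg]
    · refine Finset.sum_congr rfl fun k _ => ?_
      rw [gvec_inr, abs_neg]
  set C : ℝ := (L : ℝ) * ((L : ℝ) + 1) / 2 with hC
  have hC0 : (0:ℝ) ≤ C := by positivity
  have hA : (∑ ab : TwoN n × TwoN n, |dA γ P r ω ab.1 ab.2 L (Sum.inr ())|)
      ≤ C * Vc γ P r * (((n:ℝ) * (1 + γ)) * ((n:ℝ) * (1 + γ))) := by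
    calc (∑ ab : TwoN n × TwoN n, |dA γ P r ω ab.1 ab.2 L (Sum.inr ())|)
        ≤ ∑ ab : TwoN n × TwoN n, C * (Vc γ P r * Aa γ P ω ab.1 * Bb γ ab.2) :=
          Finset.sum_le_sum fun ab _ =>
            dA_q_bound (r := r) (ω := ω) hn hγ0 hγ1 hP ab.1 ab.2 L
      _ = C * Vc γ P r * ((∑ a, Aa γ P ω a) * (∑ b, Bb γ b)) := by
          rw [Fintype.sum_prod_type, Finset.sum_mul_sum, Finset.mul_sum]
          refine Finset.sum_congr rfl fun a _ => ?_
          rw [Finset.mul_sum]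
          exact Finset.sum_congr rfl fun b _ => by ring
      _ = C * Vc γ P r * (((n:ℝ) * (1 + γ)) * ((n:ℝ) * (1 + γ))) := by
          rw [sum_Aa hγ0 hP, sum_Bb]
  have hU : (∑ k : TwoN n, |dU γ P r ω k L (Sum.inr ())|)
      ≤ (L:ℝ) * ((n:ℝ) * (1 + γ)) := by
    calc (∑ k : TwoN n, |dU γ P r ω k L (Sum.inr ())|)
        ≤ ∑ k : TwoN n, (L:ℝ) * Bb γ k :=
          Finset.sum_le_sum fun k _ => dU_q_bound (r := r) (ω := ω) hγ0 hγ1 hP k L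
      _ = (L:ℝ) * ((n:ℝ) * (1 + γ)) := by rw [← Finset.mul_sum, sum_Bb]
  rw [hsum]
  set W : ℝ := ‖valueV γ P r‖ with hW
  have hW0 : (0:ℝ) ≤ W := norm_nonneg _
  have hN : (1:ℝ) ≤ (n:ℝ) := by exact_mod_cast hn
  have hL0 : (0:ℝ) ≤ (L:ℝ) := Nat.cast_nonneg L
  have hg0 : (0:ℝ) ≤ 1 + γ := by linarith
  have hg1 : (0:ℝ) ≤ 1 - γ := by linarith
  have hVc : Vc γ P r = (1 + γ) * W := rfl
  have hCe : (((L : ℝ) ^ 2 + L) / 2) = C := by rw [hC]; ring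
  have hkey : C * Vc γ P r * (((n:ℝ) * (1 + γ)) * ((n:ℝ) * (1 + γ)))
      ≤ C * (2 * (n : ℝ) * ((n : ℝ) * (1 + γ) ^ 2 * W + (1 + γ) ^ 2)) := by
    rw [hVc, mul_assoc]
    refine mul_le_mul_of_nonneg_left ?_ hC0
    have hint1 : (0:ℝ) ≤ (n:ℝ)^2 * (1+γ)^2 * W * (1-γ) :=
      mul_nonneg (mul_nonneg (mul_nonneg (pow_nonneg (by linarith) 2)
        (pow_nonneg hg0 2)) hW0) hg1
    have hint2 : (0:ℝ) ≤ (n:ℝ) * (1+γ)^2 :=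
      mul_nonneg (by linarith) (pow_nonneg hg0 2)
    nlinarith [hint1, hint2]
  have hfin : (L:ℝ) * ((n:ℝ) * (1 + γ)) ≤ (L : ℝ) * (2 * (n : ℝ) * (1 + γ)) := by
    have : (0:ℝ) ≤ (L:ℝ) * ((n:ℝ) * (1 + γ)) :=
      mul_nonneg hL0 (mul_nonneg (by linarith) hg0)
    nlinarith
  rw [hCe]
  linarith

end
end

section
/- For every L ≥ 0 and every probability vector ρ ∈ ℝ^n (entries nonnegative, summing to 1), the expected TD semi-gradient of the looped L-layer Transformer at the TD parameters satisfies the quantitative bound ‖ Σ_{ω=1}^n ρ_ω Σ_{j=1}^n P_{ωj} ( r_ω + γ F_L^{(j)}(A^TD, 0) − F_L^{(ω)}(A^TD, 0) ) g_L(ω) ‖_1 ≤ ‖r‖_∞ γ^L ( ((L² + L)/2) ν + L ξ ), where ν = 2n(n(1+γ)²‖v‖_∞ + (1+γ)²) and ξ = 2n(1+γ). -/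
open Matrix Filter Topology

noncomputable section

namespace S16
variable {n : ℕ}

def myB (γ : ℝ) (P : Matrix (Fin n) (Fin n) ℝ) (A : Matrix (TwoN n) (TwoN n) ℝ)
    (c c' : Fin n) : ℝ :=
  ∑ k2, ∑ k1, Xmat γ P k1 c * A k1 k2 * Xmat γ P k2 c'

def myb (γ : ℝ) (P : Matrix (Fin n) (Fin n) ℝ) (A : Matrix (TwoN n) (TwoN n) ℝ)
    (j : Fin n) (c : Fin n) : ℝ :=
  ∑ k2, ∑ k1, Xmat γ P k1 c * A k1 k2 * xqv j k2

def uX (γ : ℝ) (P : Matrix (Fin n) (Fin n) ℝ) (u : Matrix Unit (TwoN n) ℝ) (c : Fin n) : ℝ :=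
  ∑ k, u () k * Xmat γ P k c

lemma attn_top (u : Matrix Unit (TwoN n) ℝ)
    (A : Matrix (TwoN n) (TwoN n) ℝ) (Z : Matrix (RIdx n) (CIdx n) ℝ) (k : TwoN n) (q : CIdx n) :
    attnLayer n (Pmat n u) (Qmat n A) Z (Sum.inl k) q = Z (Sum.inl k) q := by
  have hrow : ∀ y, Pmat n u (Sum.inl k) y = 0 := by
    intro y; cases y <;> simp [Pmat, Matrix.fromBlocks]
  have h1 : ∀ x, (Pmat n u * Z) (Sum.inl k) x = 0 := by
    intro x; simp [Matrix.mul_apply, hrow]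
  have h2 : ∀ x, (Pmat n u * Z * maskM n) (Sum.inl k) x = 0 := by
    intro x; simp [Matrix.mul_apply, h1]
  show Z (Sum.inl k) q + (Pmat n u * Z * maskM n * (Zᵀ * Qmat n A * Z)) (Sum.inl k) q = _
  simp [Matrix.mul_apply, h2]

lemma attn_bot (γ : ℝ) (P : Matrix (Fin n) (Fin n) ℝ) (u : Matrix Unit (TwoN n) ℝ)
    (A : Matrix (TwoN n) (TwoN n) ℝ) (Z : Matrix (RIdx n) (CIdx n) ℝ)
    (hX : ∀ k c, Z (Sum.inl k) (Sum.inl c) = Xmat γ P k c) (q : CIdx n) :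
    attnLayer n (Pmat n u) (Qmat n A) Z (Sum.inr ()) q
      = Z (Sum.inr ()) q + ∑ c : Fin n, (Z (Sum.inr ()) (Sum.inl c) + uX γ P u c) *
          (∑ k2, ∑ k1, Xmat γ P k1 c * A k1 k2 * Z (Sum.inl k2) q) := by
  have h1 : ∀ x, (Pmat n u * Z) (Sum.inr ()) x
      = (∑ m : TwoN n, u () m * Z (Sum.inl m) x) + Z (Sum.inr ()) x := by
    intro x
    simp [Matrix.mul_apply, Fintype.sum_sum_type, Pmat, Matrix.fromBlocks,
      Matrix.one_apply]
  have h2 : ∀ x, (Pmat n u * Z * maskM n) (Sum.inr ()) x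
      = match x with
        | Sum.inl c => (∑ m : TwoN n, u () m * Z (Sum.inl m) (Sum.inl c)) + Z (Sum.inr ()) (Sum.inl c)
        | Sum.inr _ => 0 := by
    intro x
    cases x with
    | inl c =>
      rw [Matrix.mul_apply, Fintype.sum_sum_type]
      simp [h1, maskM, Matrix.fromBlocks, Matrix.one_apply, Finset.sum_ite_eq']
    | inr _ =>
      rw [Matrix.mul_apply, Fintype.sum_sum_type]
      simp [h1, maskM, Matrix.fromBlocks]
  have h3 : ∀ (c : Fin n), (Zᵀ * Qmat n A * Z) (Sum.inl c) q
      = ∑ k2, ∑ k1, Z (Sum.inl k1) (Sum.inl c) * A k1 k2 * Z (Sum.inl k2) q := by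
    intro c
    have hq : ∀ y, (Zᵀ * Qmat n A) (Sum.inl c) y
        = match y with
          | Sum.inl k2 => ∑ k1, Z (Sum.inl k1) (Sum.inl c) * A k1 k2
          | Sum.inr _ => 0 := by
      intro y
      cases y with
      | inl k2 =>
        simp [Matrix.mul_apply, Fintype.sum_sum_type, Qmat, Matrix.fromBlocks,
          Matrix.transpose_apply]
      | inr _ =>
        simp [Matrix.mul_apply, Fintype.sum_sum_type, Qmat, Matrix.fromBlocks,
          Matrix.transpose_apply]
    rw [Matrix.mul_apply, Fintype.sum_sum_type]
    simp only [hq, zero_mul, Finset.sum_const_zero, add_zero]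
    rw [Fintype.sum_sum_type]
    simp [Finset.sum_mul, add_mul]
  show Z (Sum.inr ()) q + (Pmat n u * Z * maskM n * (Zᵀ * Qmat n A * Z)) (Sum.inr ()) q = _
  congr 1
  rw [Matrix.mul_apply, Fintype.sum_sum_type]
  simp only [h2, h3]
  simp only [Finset.univ_unique, Finset.sum_singleton, zero_mul, add_zero]
  refine Finset.sum_congr rfl ?_
  intro c _
  rw [uX]
  simp only [hX]
  ring


def yS (γ : ℝ) (P : Matrix (Fin n) (Fin n) ℝ) (r : Fin n → ℝ) (A : Matrix (TwoN n) (TwoN n) ℝ)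
    (u : Matrix Unit (TwoN n) ℝ) : ℕ → Fin n → ℝ
  | 0 => r
  | l + 1 => fun c' => yS γ P r A u l c'
      + ∑ c, (yS γ P r A u l c + uX γ P u c) * myB γ P A c c'

def sS (γ : ℝ) (P : Matrix (Fin n) (Fin n) ℝ) (r : Fin n → ℝ) (A : Matrix (TwoN n) (TwoN n) ℝ)
    (u : Matrix Unit (TwoN n) ℝ) (j : Fin n) : ℕ → ℝ
  | 0 => 0
  | l + 1 => sS γ P r A u j l
      + ∑ c, (yS γ P r A u l c + uX γ P u c) * myb γ P A j c

lemma embed_apply (γ : ℝ) (P : Matrix (Fin n) (Fin n) ℝ) (r : Fin n → ℝ) (j : Fin n)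
    (A : Matrix (TwoN n) (TwoN n) ℝ) (u : Matrix Unit (TwoN n) ℝ) : ∀ l,
    (∀ k q, embed γ P r j A u l (Sum.inl k) q = prompt γ P r j (Sum.inl k) q)
    ∧ (∀ c, embed γ P r j A u l (Sum.inr ()) (Sum.inl c) = yS γ P r A u l c)
    ∧ embed γ P r j A u l (Sum.inr ()) (Sum.inr ()) = sS γ P r A u j l := by
  intro l
  induction l with
  | zero =>
    refine ⟨fun k q => rfl, fun c => rfl, rfl⟩
  | succ l ih =>
    obtain ⟨htop, hyl, hsl⟩ := ih
    have hX : ∀ k c, embed γ P r j A u l (Sum.inl k) (Sum.inl c) = Xmat γ P k c := by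
      intro k c
      rw [htop]
      cases k <;> simp [prompt, Xmat]
    refine ⟨?_, ?_, ?_⟩
    · intro k q
      show attnLayer n (Pmat n u) (Qmat n A) (embed γ P r j A u l) (Sum.inl k) q = _
      rw [attn_top, htop]
    · intro c'
      show attnLayer n (Pmat n u) (Qmat n A) (embed γ P r j A u l) (Sum.inr ()) (Sum.inl c') = _
      rw [attn_bot γ P u A _ hX]
      show _ = yS γ P r A u l c' + ∑ c, (yS γ P r A u l c + uX γ P u c) * myB γ P A c c'
      rw [hyl]
      congr 1
      refine Finset.sum_congr rfl fun c _ => ?_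
      rw [hyl]
      congr 1
      rw [myB]
      refine Finset.sum_congr rfl fun k2 _ => Finset.sum_congr rfl fun k1 _ => ?_
      rw [hX]
    · show attnLayer n (Pmat n u) (Qmat n A) (embed γ P r j A u l) (Sum.inr ()) (Sum.inr ()) = _
      rw [attn_bot γ P u A _ hX]
      show _ = sS γ P r A u j l + ∑ c, (yS γ P r A u l c + uX γ P u c) * myb γ P A j c
      rw [hsl]
      congr 1
      refine Finset.sum_congr rfl fun c _ => ?_
      rw [hyl]
      congr 1
      rw [myb]
      refine Finset.sum_congr rfl fun k2 _ => Finset.sum_congr rfl fun k1 _ => ?_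
      rw [htop]
      congr 1
      cases k2 <;> simp [prompt, xqv]

lemma tfOut_eq (γ : ℝ) (P : Matrix (Fin n) (Fin n) ℝ) (r : Fin n → ℝ) (j : Fin n)
    (A : Matrix (TwoN n) (TwoN n) ℝ) (u : Matrix Unit (TwoN n) ℝ) (L : ℕ) :
    tfOut γ P r j A u L = -(sS γ P r A u j L) := by
  rw [tfOut, (embed_apply γ P r j A u L).2.2]


lemma uX_zero (γ : ℝ) (P : Matrix (Fin n) (Fin n) ℝ) (c : Fin n) : uX γ P 0 c = 0 := by
  simp [uX]

lemma myB_Atd (γ : ℝ) (P : Matrix (Fin n) (Fin n) ℝ) (c c' : Fin n) :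
    myB γ P (Atd n) c c' = (if c = c' then (-1 : ℝ) else 0) + γ * P c' c := by
  rw [myB]
  rw [Fintype.sum_sum_type]
  simp only [Fintype.sum_sum_type]
  simp [Xmat, Atd, Matrix.fromBlocks, Matrix.one_apply, mul_ite, ite_mul,
    Finset.sum_ite_eq, Finset.sum_ite_eq', eq_comm, mul_comm]
  split <;> ring

lemma myb_Atd (γ : ℝ) (P : Matrix (Fin n) (Fin n) ℝ) (j c : Fin n) :
    myb γ P (Atd n) j c = -(if c = j then (1 : ℝ) else 0) := by
  rw [myb]
  rw [Fintype.sum_sum_type]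
  simp only [Fintype.sum_sum_type]
  simp [Xmat, Atd, xqv, Matrix.fromBlocks, Matrix.one_apply, mul_ite, ite_mul,
    Finset.sum_ite_eq, Finset.sum_ite_eq', eq_comm]

lemma yTD_succ (γ : ℝ) (P : Matrix (Fin n) (Fin n) ℝ) (r : Fin n → ℝ) (l : ℕ) (c' : Fin n) :
    yS γ P r (Atd n) 0 (l + 1) c' = γ * ∑ c, P c' c * yS γ P r (Atd n) 0 l c := by
  show yS γ P r (Atd n) 0 l c' + ∑ c, (yS γ P r (Atd n) 0 l c + uX γ P 0 c) * myB γ P (Atd n) c c' = _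
  have e : ∀ c, (yS γ P r (Atd n) 0 l c + uX γ P 0 c) * myB γ P (Atd n) c c'
      = (if c = c' then -yS γ P r (Atd n) 0 l c else 0)
        + γ * (P c' c * yS γ P r (Atd n) 0 l c) := by
    intro c; rw [uX_zero, myB_Atd]; split <;> ring
  rw [Finset.sum_congr rfl (fun c _ => e c), Finset.sum_add_distrib, Finset.sum_ite_eq',
    Finset.mul_sum]
  simp

lemma sTD_succ (γ : ℝ) (P : Matrix (Fin n) (Fin n) ℝ) (r : Fin n → ℝ) (j : Fin n) (l : ℕ) :
    sS γ P r (Atd n) 0 j (l + 1) = sS γ P r (Atd n) 0 j l - yS γ P r (Atd n) 0 l j := by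
  show sS γ P r (Atd n) 0 j l + ∑ c, (yS γ P r (Atd n) 0 l c + uX γ P 0 c) * myb γ P (Atd n) j c = _
  simp only [uX_zero, add_zero, myb_Atd, mul_neg, mul_ite, mul_one, mul_zero,
    Finset.sum_neg_distrib, Finset.sum_ite_eq', Finset.mem_univ, if_true]
  ring

lemma tfTD_eq (γ : ℝ) (P : Matrix (Fin n) (Fin n) ℝ) (r : Fin n → ℝ) (j : Fin n) (L : ℕ) :
    tfTD γ P r j L = ∑ l ∈ Finset.range L, yS γ P r (Atd n) 0 l j := by
  rw [tfTD, tfOut_eq]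
  induction L with
  | zero => simp [sS]
  | succ L ih =>
    rw [sTD_succ, Finset.sum_range_succ, ← ih]
    ring

lemma coeff_eq (γ : ℝ) (P : Matrix (Fin n) (Fin n) ℝ) (hP : RowStochastic P) (r : Fin n → ℝ)
    (L : ℕ) (ω : Fin n) :
    ∑ j, P ω j * (r ω + γ * tfTD γ P r j L - tfTD γ P r ω L)
      = yS γ P r (Atd n) 0 L ω := by
  have hsum : ∑ j, P ω j = 1 := hP.2 ω
  have h1 : ∑ j, P ω j * (r ω + γ * tfTD γ P r j L - tfTD γ P r ω L)
      = r ω + γ * (∑ j, P ω j * tfTD γ P r j L) - tfTD γ P r ω L := by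
    simp only [mul_sub, mul_add, Finset.sum_sub_distrib, Finset.sum_add_distrib,
      ← Finset.sum_mul, hsum, one_mul, Finset.mul_sum]
    ring_nf
    congr 2
    linarith [(Finset.sum_congr rfl fun c _ => by ring : ∑ x, P ω x * γ * tfTD γ P r x L = ∑ x, γ * P ω x * tfTD γ P r x L)]
  rw [h1]
  have h2 : ∑ j, P ω j * tfTD γ P r j L
      = ∑ l ∈ Finset.range L, ∑ j, P ω j * yS γ P r (Atd n) 0 l j := by
    simp only [tfTD_eq, Finset.mul_sum]
    rw [Finset.sum_comm]
  rw [h2, Finset.mul_sum, tfTD_eq]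
  have h3 : ∀ l, γ * ∑ j, P ω j * yS γ P r (Atd n) 0 l j = yS γ P r (Atd n) 0 (l + 1) ω := by
    intro l; rw [yTD_succ]
  simp only [h3]
  have h4 : ∑ l ∈ Finset.range L, (yS γ P r (Atd n) 0 (l + 1) ω - yS γ P r (Atd n) 0 l ω)
      = yS γ P r (Atd n) 0 L ω - yS γ P r (Atd n) 0 0 ω :=
    Finset.sum_range_sub (f := fun l => yS γ P r (Atd n) 0 l ω) L
  have h0 : yS γ P r (Atd n) 0 0 ω = r ω := rfl
  rw [Finset.sum_sub_distrib] at h4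
  rw [h0] at h4
  linarith [h4]


lemma yS_succ_u0 (γ : ℝ) (P : Matrix (Fin n) (Fin n) ℝ) (r : Fin n → ℝ)
    (A : Matrix (TwoN n) (TwoN n) ℝ) (l : ℕ) (c' : Fin n) :
    yS γ P r A 0 (l + 1) c' = yS γ P r A 0 l c' + ∑ c, yS γ P r A 0 l c * myB γ P A c c' := by
  show yS γ P r A 0 l c' + ∑ c, (yS γ P r A 0 l c + uX γ P 0 c) * myB γ P A c c' = _
  simp [uX_zero]

lemma sS_succ_u0 (γ : ℝ) (P : Matrix (Fin n) (Fin n) ℝ) (r : Fin n → ℝ)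
    (A : Matrix (TwoN n) (TwoN n) ℝ) (j : Fin n) (l : ℕ) :
    sS γ P r A 0 j (l + 1) = sS γ P r A 0 j l + ∑ c, yS γ P r A 0 l c * myb γ P A j c := by
  show sS γ P r A 0 j l + ∑ c, (yS γ P r A 0 l c + uX γ P 0 c) * myb γ P A j c = _
  simp [uX_zero]

lemma myB_add_smul (γ : ℝ) (P : Matrix (Fin n) (Fin n) ℝ)
    (A E : Matrix (TwoN n) (TwoN n) ℝ) (t : ℝ) (c c' : Fin n) :
    myB γ P (A + t • E) c c' = myB γ P A c c' + t * myB γ P E c c' := by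
  have e : ∀ (k2 k1 : TwoN n), Xmat γ P k1 c * (A + t • E) k1 k2 * Xmat γ P k2 c'
      = Xmat γ P k1 c * A k1 k2 * Xmat γ P k2 c'
        + t * (Xmat γ P k1 c * E k1 k2 * Xmat γ P k2 c') := by
    intro k2 k1
    simp only [Matrix.add_apply, Matrix.smul_apply, smul_eq_mul]
    ring
  simp only [myB, e, Finset.sum_add_distrib, Finset.mul_sum]

lemma myb_add_smul (γ : ℝ) (P : Matrix (Fin n) (Fin n) ℝ)
    (A E : Matrix (TwoN n) (TwoN n) ℝ) (t : ℝ) (j c : Fin n) :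
    myb γ P (A + t • E) j c = myb γ P A j c + t * myb γ P E j c := by
  have e : ∀ (k2 k1 : TwoN n), Xmat γ P k1 c * (A + t • E) k1 k2 * xqv j k2
      = Xmat γ P k1 c * A k1 k2 * xqv j k2
        + t * (Xmat γ P k1 c * E k1 k2 * xqv j k2) := by
    intro k2 k1
    simp only [Matrix.add_apply, Matrix.smul_apply, smul_eq_mul]
    ring
  simp only [myb, e, Finset.sum_add_distrib, Finset.mul_sum]

def ydA (γ : ℝ) (P : Matrix (Fin n) (Fin n) ℝ) (r : Fin n → ℝ)
    (E : Matrix (TwoN n) (TwoN n) ℝ) : ℕ → Fin n → ℝ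
  | 0 => 0
  | l + 1 => fun c' => ydA γ P r E l c'
      + ∑ c, (ydA γ P r E l c * myB γ P (Atd n) c c'
          + yS γ P r (Atd n) 0 l c * myB γ P E c c')

def sdA (γ : ℝ) (P : Matrix (Fin n) (Fin n) ℝ) (r : Fin n → ℝ)
    (E : Matrix (TwoN n) (TwoN n) ℝ) (j : Fin n) : ℕ → ℝ
  | 0 => 0
  | l + 1 => sdA γ P r E j l
      + ∑ c, (ydA γ P r E l c * myb γ P (Atd n) j c
          + yS γ P r (Atd n) 0 l c * myb γ P E j c)

lemma hasDerivAt_ySA (γ : ℝ) (P : Matrix (Fin n) (Fin n) ℝ) (r : Fin n → ℝ)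
    (E : Matrix (TwoN n) (TwoN n) ℝ) : ∀ (l : ℕ) (c : Fin n),
    HasDerivAt (fun t : ℝ => yS γ P r (Atd n + t • E) 0 l c) (ydA γ P r E l c) 0 := by
  intro l
  induction l with
  | zero => intro c; exact hasDerivAt_const 0 (r c)
  | succ l ih =>
    intro c'
    have hfun : (fun t : ℝ => yS γ P r (Atd n + t • E) 0 (l + 1) c')
        = fun t : ℝ => yS γ P r (Atd n + t • E) 0 l c'
          + ∑ c, yS γ P r (Atd n + t • E) 0 l c * (myB γ P (Atd n) c c' + t * myB γ P E c c') := by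
      funext t
      rw [yS_succ_u0]
      simp only [myB_add_smul]
    rw [hfun]
    have hterm : ∀ c : Fin n, HasDerivAt
        (fun t : ℝ => yS γ P r (Atd n + t • E) 0 l c * (myB γ P (Atd n) c c' + t * myB γ P E c c'))
        (ydA γ P r E l c * myB γ P (Atd n) c c' + yS γ P r (Atd n) 0 l c * myB γ P E c c') 0 := by
      intro c
      have hg : HasDerivAt (fun t : ℝ => myB γ P (Atd n) c c' + t * myB γ P E c c')
          (myB γ P E c c') 0 := by
        simpa using ((hasDerivAt_id (0:ℝ)).mul_const (myB γ P E c c')).const_add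
          (myB γ P (Atd n) c c')
      have := (ih c).mul hg
      refine this.congr_deriv ?_
      simp [zero_smul]
    have hsum := HasDerivAt.fun_sum (fun c (_ : c ∈ Finset.univ) => hterm c)
    have := (ih c').add hsum
    exact this

lemma hasDerivAt_sSA (γ : ℝ) (P : Matrix (Fin n) (Fin n) ℝ) (r : Fin n → ℝ)
    (E : Matrix (TwoN n) (TwoN n) ℝ) (j : Fin n) : ∀ (L : ℕ),
    HasDerivAt (fun t : ℝ => sS γ P r (Atd n + t • E) 0 j L) (sdA γ P r E j L) 0 := by
  intro L
  induction L with
  | zero => exact hasDerivAt_const 0 0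
  | succ L ih =>
    have hfun : (fun t : ℝ => sS γ P r (Atd n + t • E) 0 j (L + 1))
        = fun t : ℝ => sS γ P r (Atd n + t • E) 0 j L
          + ∑ c, yS γ P r (Atd n + t • E) 0 L c * (myb γ P (Atd n) j c + t * myb γ P E j c) := by
      funext t
      rw [sS_succ_u0]
      simp only [myb_add_smul]
    rw [hfun]
    have hterm : ∀ c : Fin n, HasDerivAt
        (fun t : ℝ => yS γ P r (Atd n + t • E) 0 L c * (myb γ P (Atd n) j c + t * myb γ P E j c))
        (ydA γ P r E L c * myb γ P (Atd n) j c + yS γ P r (Atd n) 0 L c * myb γ P E j c) 0 := by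
      intro c
      have hg : HasDerivAt (fun t : ℝ => myb γ P (Atd n) j c + t * myb γ P E j c)
          (myb γ P E j c) 0 := by
        simpa using ((hasDerivAt_id (0:ℝ)).mul_const (myb γ P E j c)).const_add
          (myb γ P (Atd n) j c)
      have := (hasDerivAt_ySA γ P r E L c).mul hg
      refine this.congr_deriv ?_
      simp [zero_smul]
    have hsum := HasDerivAt.fun_sum (fun c (_ : c ∈ Finset.univ) => hterm c)
    have := ih.add hsum
    exact this

lemma gvec_inl (γ : ℝ) (P : Matrix (Fin n) (Fin n) ℝ) (r : Fin n → ℝ) (L : ℕ) (j : Fin n)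
    (ab : TwoN n × TwoN n) :
    gvec γ P r L j (Sum.inl ab)
      = -(sdA γ P r (Matrix.single ab.1 ab.2 1) j L) := by
  show deriv (fun t : ℝ =>
      tfOut γ P r j (Atd n + t • Matrix.single ab.1 ab.2 1) 0 L) 0 = _
  have hfun : (fun t : ℝ =>
      tfOut γ P r j (Atd n + t • Matrix.single ab.1 ab.2 1) 0 L)
      = fun t : ℝ => -(sS γ P r (Atd n + t • Matrix.single ab.1 ab.2 1) 0 j L) := by
    funext t
    rw [tfOut_eq]
  rw [hfun]
  exact ((hasDerivAt_sSA γ P r _ j L).neg).deriv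


lemma uX_smul_std (γ : ℝ) (P : Matrix (Fin n) (Fin n) ℝ) (t : ℝ) (k : TwoN n) (c : Fin n) :
    uX γ P (t • Matrix.single () k 1) c = t * Xmat γ P k c := by
  rw [uX]
  simp [Matrix.single, Matrix.smul_apply, ite_mul, Finset.sum_ite_eq,
    Finset.sum_ite_eq', mul_ite, mul_assoc]

def ydU (γ : ℝ) (P : Matrix (Fin n) (Fin n) ℝ) (r : Fin n → ℝ) (k : TwoN n) : ℕ → Fin n → ℝ
  | 0 => 0
  | l + 1 => fun c' => ydU γ P r k l c'
      + ∑ c, (ydU γ P r k l c + Xmat γ P k c) * myB γ P (Atd n) c c'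

def sdU (γ : ℝ) (P : Matrix (Fin n) (Fin n) ℝ) (r : Fin n → ℝ) (k : TwoN n) (j : Fin n) :
    ℕ → ℝ
  | 0 => 0
  | l + 1 => sdU γ P r k j l
      + ∑ c, (ydU γ P r k l c + Xmat γ P k c) * myb γ P (Atd n) j c

lemma hasDerivAt_ySU (γ : ℝ) (P : Matrix (Fin n) (Fin n) ℝ) (r : Fin n → ℝ) (k : TwoN n) :
    ∀ (l : ℕ) (c : Fin n),
    HasDerivAt (fun t : ℝ => yS γ P r (Atd n) (t • Matrix.single () k 1) l c)
      (ydU γ P r k l c) 0 := by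
  intro l
  induction l with
  | zero => intro c; exact hasDerivAt_const 0 (r c)
  | succ l ih =>
    intro c'
    have hfun : (fun t : ℝ => yS γ P r (Atd n) (t • Matrix.single () k 1) (l + 1) c')
        = fun t : ℝ => yS γ P r (Atd n) (t • Matrix.single () k 1) l c'
          + ∑ c, (yS γ P r (Atd n) (t • Matrix.single () k 1) l c + t * Xmat γ P k c)
              * myB γ P (Atd n) c c' := by
      funext t
      show yS γ P r (Atd n) _ l c' + ∑ c, (yS γ P r (Atd n) _ l c + uX γ P _ c) * myB γ P (Atd n) c c' = _
      simp only [uX_smul_std]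
    rw [hfun]
    have hterm : ∀ c : Fin n, HasDerivAt
        (fun t : ℝ => (yS γ P r (Atd n) (t • Matrix.single () k 1) l c + t * Xmat γ P k c)
            * myB γ P (Atd n) c c')
        ((ydU γ P r k l c + Xmat γ P k c) * myB γ P (Atd n) c c') 0 := by
      intro c
      have := ((ih c).add ((hasDerivAt_id (0:ℝ)).mul_const (Xmat γ P k c))).mul_const
        (myB γ P (Atd n) c c')
      simpa using this
    have hsum := HasDerivAt.fun_sum (fun c (_ : c ∈ Finset.univ) => hterm c)
    exact (ih c').add hsum

lemma hasDerivAt_sSU (γ : ℝ) (P : Matrix (Fin n) (Fin n) ℝ) (r : Fin n → ℝ) (k : TwoN n)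
    (j : Fin n) : ∀ (L : ℕ),
    HasDerivAt (fun t : ℝ => sS γ P r (Atd n) (t • Matrix.single () k 1) j L)
      (sdU γ P r k j L) 0 := by
  intro L
  induction L with
  | zero => exact hasDerivAt_const 0 0
  | succ L ih =>
    have hfun : (fun t : ℝ => sS γ P r (Atd n) (t • Matrix.single () k 1) j (L + 1))
        = fun t : ℝ => sS γ P r (Atd n) (t • Matrix.single () k 1) j L
          + ∑ c, (yS γ P r (Atd n) (t • Matrix.single () k 1) L c + t * Xmat γ P k c)
              * myb γ P (Atd n) j c := by
      funext t
      show sS γ P r (Atd n) _ j L + ∑ c, (yS γ P r (Atd n) _ L c + uX γ P _ c) * myb γ P (Atd n) j c = _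
      simp only [uX_smul_std]
    rw [hfun]
    have hterm : ∀ c : Fin n, HasDerivAt
        (fun t : ℝ => (yS γ P r (Atd n) (t • Matrix.single () k 1) L c + t * Xmat γ P k c)
            * myb γ P (Atd n) j c)
        ((ydU γ P r k L c + Xmat γ P k c) * myb γ P (Atd n) j c) 0 := by
      intro c
      have := ((hasDerivAt_ySU γ P r k L c).add
        ((hasDerivAt_id (0:ℝ)).mul_const (Xmat γ P k c))).mul_const (myb γ P (Atd n) j c)
      simpa using this
    have hsum := HasDerivAt.fun_sum (fun c (_ : c ∈ Finset.univ) => hterm c)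
    exact ih.add hsum

lemma gvec_inr (γ : ℝ) (P : Matrix (Fin n) (Fin n) ℝ) (r : Fin n → ℝ) (L : ℕ) (j : Fin n)
    (k : TwoN n) :
    gvec γ P r L j (Sum.inr k) = -(sdU γ P r k j L) := by
  show deriv (fun t : ℝ =>
      tfOut γ P r j (Atd n) (t • Matrix.single () k 1) L) 0 = _
  have hfun : (fun t : ℝ => tfOut γ P r j (Atd n) (t • Matrix.single () k 1) L)
      = fun t : ℝ => -(sS γ P r (Atd n) (t • Matrix.single () k 1) j L) := by
    funext t
    rw [tfOut_eq]
  rw [hfun]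
  exact ((hasDerivAt_sSU γ P r k j L).neg).deriv


/-- column-bound for `X` rows. -/
def Xb (γ : ℝ) : TwoN n → ℝ := Sum.elim (fun _ => 1) (fun _ => γ)

/-- bound for `|∑ c, X a c * y c|` relative to `‖y‖`. -/
def cbb (γ : ℝ) (P : Matrix (Fin n) (Fin n) ℝ) : TwoN n → ℝ :=
  Sum.elim (fun _ => 1) (fun m => γ * ∑ c, P c m)

section Bounds

variable {γ : ℝ} {P : Matrix (Fin n) (Fin n) ℝ} {r : Fin n → ℝ}
variable (hγ0 : 0 ≤ γ) (hγ1 : γ ≤ 1) (hP : RowStochastic P)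

include hP in
lemma Ple1 : ∀ i k, P i k ≤ 1 := by
  intro i k
  have := Finset.single_le_sum (f := fun k => P i k) (fun c _ => hP.1 i c) (Finset.mem_univ k)
  rw [hP.2 i] at this
  exact this

include hγ0 hP in
lemma absX_le (k : TwoN n) (c : Fin n) : |Xmat γ P k c| ≤ Xb γ k := by
  cases k with
  | inl m =>
    simp only [Xmat, Xb, Sum.elim_inl]
    split <;> simp
  | inr m =>
    simp only [Xmat, Xb, Sum.elim_inr]
    rw [abs_of_nonneg (mul_nonneg hγ0 (hP.1 c m))]
    calc γ * P c m ≤ γ * 1 := mul_le_mul_of_nonneg_left (Ple1 hP c m) hγ0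
      _ = γ := mul_one γ

include hγ0 in
lemma Xb_nonneg (k : TwoN n) : 0 ≤ Xb γ k := by
  cases k <;> simp [Xb] <;> linarith

include hγ0 hP in
lemma cbb_nonneg (k : TwoN n) : 0 ≤ cbb γ P k := by
  cases k with
  | inl m => simp [cbb]
  | inr m =>
    simp only [cbb, Sum.elim_inr]
    exact mul_nonneg hγ0 (Finset.sum_nonneg fun c _ => hP.1 c m)

lemma sum_Xb : ∑ k : TwoN n, Xb γ k = n * (1 + γ) := by
  rw [Fintype.sum_sum_type]
  simp [Xb, Finset.sum_const, mul_add]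

include hP in
lemma sum_cbb : ∑ k : TwoN n, cbb γ P k = n * (1 + γ) := by
  rw [Fintype.sum_sum_type]
  simp only [cbb, Sum.elim_inl, Sum.elim_inr]
  rw [← Finset.mul_sum, Finset.sum_comm]
  simp [hP.2, mul_add, mul_comm]

include hγ0 hγ1 hP in
lemma y0_bound : ∀ (l : ℕ) (c : Fin n), |yS γ P r (Atd n) 0 l c| ≤ γ ^ l * ‖r‖ := by
  intro l
  induction l with
  | zero =>
    intro c
    simpa [yS] using norm_le_pi_norm r c
  | succ l ih =>
    intro c'
    rw [yTD_succ, pow_succ']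
    rw [abs_mul, abs_of_nonneg hγ0]
    have h1 : |∑ c, P c' c * yS γ P r (Atd n) 0 l c| ≤ γ ^ l * ‖r‖ := by
      calc |∑ c, P c' c * yS γ P r (Atd n) 0 l c| ≤ ∑ c, |P c' c * yS γ P r (Atd n) 0 l c| :=
            Finset.abs_sum_le_sum_abs _ _
        _ ≤ ∑ c, P c' c * (γ ^ l * ‖r‖) := by
            refine Finset.sum_le_sum fun c _ => ?_
            rw [abs_mul, abs_of_nonneg (hP.1 c' c)]
            exact mul_le_mul_of_nonneg_left (ih c) (hP.1 c' c)
        _ = γ ^ l * ‖r‖ := by rw [← Finset.sum_mul, hP.2 c', one_mul]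
    calc γ * |∑ c, P c' c * yS γ P r (Atd n) 0 l c| ≤ γ * (γ ^ l * ‖r‖) :=
          mul_le_mul_of_nonneg_left h1 hγ0
      _ = γ * γ ^ l * ‖r‖ := by ring

include hγ0 hγ1 hP in
lemma Xy0_bound : ∀ (l : ℕ) (a : TwoN n),
    |∑ c, Xmat γ P a c * yS γ P r (Atd n) 0 l c| ≤ γ ^ l * ‖r‖ * cbb γ P a := by
  intro l a
  cases a with
  | inl m =>
    have : ∑ c, Xmat γ P (Sum.inl m) c * yS γ P r (Atd n) 0 l c
        = yS γ P r (Atd n) 0 l m := by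
      simp [Xmat, ite_mul, Finset.sum_ite_eq]
    rw [this]
    simpa [cbb] using y0_bound hγ0 hγ1 hP l m
  | inr m =>
    simp only [Xmat, cbb, Sum.elim_inr]
    calc |∑ c, γ * P c m * yS γ P r (Atd n) 0 l c|
        ≤ ∑ c, |γ * P c m * yS γ P r (Atd n) 0 l c| := Finset.abs_sum_le_sum_abs _ _
      _ ≤ ∑ c, γ * P c m * (γ ^ l * ‖r‖) := by
          refine Finset.sum_le_sum fun c _ => ?_
          rw [abs_mul, abs_of_nonneg (mul_nonneg hγ0 (hP.1 c m))]
          exact mul_le_mul_of_nonneg_left (y0_bound hγ0 hγ1 hP l c)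
            (mul_nonneg hγ0 (hP.1 c m))
      _ = γ ^ l * ‖r‖ * (γ * ∑ c, P c m) := by
          rw [Finset.mul_sum, Finset.mul_sum]
          refine Finset.sum_congr rfl fun c _ => by ring

end Bounds

variable {γ : ℝ} {P : Matrix (Fin n) (Fin n) ℝ} {r : Fin n → ℝ}


lemma myB_std (a b : TwoN n) (c c' : Fin n) :
    myB γ P (Matrix.single a b 1) c c' = Xmat γ P a c * Xmat γ P b c' := by
  rw [myB]
  simp [Matrix.single, mul_ite, ite_mul, Finset.sum_ite_eq, Finset.sum_ite_eq',
    ite_and, Finset.sum_ite_irrel]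

lemma myb_std (a b : TwoN n) (j : Fin n) (c : Fin n) :
    myb γ P (Matrix.single a b 1) j c = Xmat γ P a c * xqv j b := by
  rw [myb]
  simp [Matrix.single, mul_ite, ite_mul, Finset.sum_ite_eq, Finset.sum_ite_eq',
    ite_and, Finset.sum_ite_irrel]

lemma ydA_succ (E : Matrix (TwoN n) (TwoN n) ℝ) (l : ℕ) (c' : Fin n) :
    ydA γ P r E (l + 1) c' = γ * (∑ c, P c' c * ydA γ P r E l c)
      + ∑ c, yS γ P r (Atd n) 0 l c * myB γ P E c c' := by
  show ydA γ P r E l c' + ∑ c, (ydA γ P r E l c * myB γ P (Atd n) c c'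
      + yS γ P r (Atd n) 0 l c * myB γ P E c c') = _
  rw [Finset.sum_add_distrib]
  have e : ∀ c, ydA γ P r E l c * myB γ P (Atd n) c c'
      = (if c = c' then -ydA γ P r E l c else 0) + γ * (P c' c * ydA γ P r E l c) := by
    intro c; rw [myB_Atd]; split <;> ring
  rw [Finset.sum_congr rfl (fun c _ => e c), Finset.sum_add_distrib, Finset.sum_ite_eq',
    Finset.mul_sum]
  simp
  ring

lemma sdA_succ (E : Matrix (TwoN n) (TwoN n) ℝ) (j : Fin n) (l : ℕ) :
    sdA γ P r E j (l + 1) = sdA γ P r E j l - ydA γ P r E l j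
      + ∑ c, yS γ P r (Atd n) 0 l c * myb γ P E j c := by
  show sdA γ P r E j l + ∑ c, (ydA γ P r E l c * myb γ P (Atd n) j c
      + yS γ P r (Atd n) 0 l c * myb γ P E j c) = _
  rw [Finset.sum_add_distrib]
  have e : ∀ c, ydA γ P r E l c * myb γ P (Atd n) j c
      = if c = j then -ydA γ P r E l c else 0 := by
    intro c; rw [myb_Atd]; split <;> ring
  rw [Finset.sum_congr rfl (fun c _ => e c), Finset.sum_ite_eq']
  simp
  ring

lemma ydU_succ (k : TwoN n) (l : ℕ) (c' : Fin n) :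
    ydU γ P r k (l + 1) c' = γ * (∑ c, P c' c * (ydU γ P r k l c + Xmat γ P k c))
      - Xmat γ P k c' := by
  show ydU γ P r k l c' + ∑ c, (ydU γ P r k l c + Xmat γ P k c) * myB γ P (Atd n) c c' = _
  have e : ∀ c, (ydU γ P r k l c + Xmat γ P k c) * myB γ P (Atd n) c c'
      = (if c = c' then -(ydU γ P r k l c + Xmat γ P k c) else 0)
        + γ * (P c' c * (ydU γ P r k l c + Xmat γ P k c)) := by
    intro c; rw [myB_Atd]; split <;> ring
  rw [Finset.sum_congr rfl (fun c _ => e c), Finset.sum_add_distrib, Finset.sum_ite_eq',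
    Finset.mul_sum]
  simp
  ring

lemma sdU_succ (k : TwoN n) (j : Fin n) (l : ℕ) :
    sdU γ P r k j (l + 1) = sdU γ P r k j l - (ydU γ P r k l j + Xmat γ P k j) := by
  show sdU γ P r k j l + ∑ c, (ydU γ P r k l c + Xmat γ P k c) * myb γ P (Atd n) j c = _
  have e : ∀ c, (ydU γ P r k l c + Xmat γ P k c) * myb γ P (Atd n) j c
      = if c = j then -(ydU γ P r k l c + Xmat γ P k c) else 0 := by
    intro c; rw [myb_Atd]; split <;> ring
  rw [Finset.sum_congr rfl (fun c _ => e c), Finset.sum_ite_eq']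
  simp
  ring

lemma ydA_bound (hγ0 : 0 ≤ γ) (hγ1 : γ ≤ 1) (hP : RowStochastic P)
    (a b : TwoN n) : ∀ (l : ℕ) (c : Fin n),
    |ydA γ P r (Matrix.single a b 1) l c|
      ≤ l * (‖r‖ * cbb γ P a * Xb γ b) := by
  intro l
  set K := ‖r‖ * cbb γ P a * Xb γ b with hK
  have hK0 : 0 ≤ K :=
    mul_nonneg (mul_nonneg (norm_nonneg r) (cbb_nonneg hγ0 hP a)) (Xb_nonneg hγ0 b)
  induction l with
  | zero => intro c; simp [ydA]
  | succ l ih =>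
    intro c'
    rw [ydA_succ]
    have h2 : ∑ c, yS γ P r (Atd n) 0 l c * myB γ P (Matrix.single a b 1) c c'
        = (∑ c, Xmat γ P a c * yS γ P r (Atd n) 0 l c) * Xmat γ P b c' := by
      rw [Finset.sum_mul]
      refine Finset.sum_congr rfl fun c _ => by rw [myB_std]; ring
    rw [h2]
    have hb1 : |γ * (∑ c, P c' c * ydA γ P r (Matrix.single a b 1) l c)|
        ≤ γ * (l * K) := by
      rw [abs_mul, abs_of_nonneg hγ0]
      refine mul_le_mul_of_nonneg_left ?_ hγ0
      calc |∑ c, P c' c * ydA γ P r (Matrix.single a b 1) l c|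
          ≤ ∑ c, |P c' c * ydA γ P r (Matrix.single a b 1) l c| :=
            Finset.abs_sum_le_sum_abs _ _
        _ ≤ ∑ c, P c' c * (l * K) := by
            refine Finset.sum_le_sum fun c _ => ?_
            rw [abs_mul, abs_of_nonneg (hP.1 c' c)]
            exact mul_le_mul_of_nonneg_left (ih c) (hP.1 c' c)
        _ = l * K := by rw [← Finset.sum_mul, hP.2 c', one_mul]
    have hb2 : |(∑ c, Xmat γ P a c * yS γ P r (Atd n) 0 l c) * Xmat γ P b c'| ≤ K := by
      rw [abs_mul]
      have h4 : |∑ c, Xmat γ P a c * yS γ P r (Atd n) 0 l c| * |Xmat γ P b c'|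
          ≤ (γ ^ l * ‖r‖ * cbb γ P a) * Xb γ b :=
        mul_le_mul (Xy0_bound hγ0 hγ1 hP l a) (absX_le hγ0 hP b c') (abs_nonneg _)
          (mul_nonneg (mul_nonneg (pow_nonneg hγ0 l) (norm_nonneg r)) (cbb_nonneg hγ0 hP a))
      have hp : γ ^ l ≤ 1 := pow_le_one₀ hγ0 hγ1
      have h5 : (γ ^ l * ‖r‖ * cbb γ P a) * Xb γ b ≤ K := by
        rw [hK]
        have h6 : 0 ≤ ‖r‖ * cbb γ P a * Xb γ b :=
          mul_nonneg (mul_nonneg (norm_nonneg r) (cbb_nonneg hγ0 hP a)) (Xb_nonneg hγ0 b)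
        nlinarith [pow_nonneg hγ0 l]
      linarith
    calc |γ * (∑ c, P c' c * ydA γ P r (Matrix.single a b 1) l c)
          + (∑ c, Xmat γ P a c * yS γ P r (Atd n) 0 l c) * Xmat γ P b c'|
        ≤ γ * (l * K) + K := le_trans (abs_add_le _ _) (add_le_add hb1 hb2)
      _ ≤ (l + 1 : ℕ) * K := by
          push_cast
          nlinarith [mul_nonneg (Nat.cast_nonneg (α := ℝ) l) hK0]

lemma sdA_bound (hγ0 : 0 ≤ γ) (hγ1 : γ ≤ 1) (hP : RowStochastic P)
    (a b : TwoN n) (j : Fin n) : ∀ (L : ℕ),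
    |sdA γ P r (Matrix.single a b 1) j L|
      ≤ (∑ l ∈ Finset.range L, (l : ℝ)) * (‖r‖ * cbb γ P a * Xb γ b)
        + L * (‖r‖ * cbb γ P a * xqv j b) := by
  intro L
  set K := ‖r‖ * cbb γ P a * Xb γ b with hK
  set K2 := ‖r‖ * cbb γ P a * xqv j b with hK2
  have hxq0 : 0 ≤ xqv j b := by
    cases b <;> simp only [xqv] <;> first | positivity | (split <;> norm_num)
  have hK20 : 0 ≤ K2 :=
    mul_nonneg (mul_nonneg (norm_nonneg r) (cbb_nonneg hγ0 hP a)) hxq0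
  induction L with
  | zero => simp [sdA]
  | succ L ih =>
    rw [sdA_succ]
    have h2 : ∑ c, yS γ P r (Atd n) 0 L c * myb γ P (Matrix.single a b 1) j c
        = (∑ c, Xmat γ P a c * yS γ P r (Atd n) 0 L c) * xqv j b := by
      rw [Finset.sum_mul]
      refine Finset.sum_congr rfl fun c _ => by rw [myb_std]; ring
    rw [h2]
    have hb2 : |(∑ c, Xmat γ P a c * yS γ P r (Atd n) 0 L c) * xqv j b| ≤ K2 := by
      rw [abs_mul, abs_of_nonneg hxq0, hK2]
      have h1 := Xy0_bound (r := r) hγ0 hγ1 hP L a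
      have hp : γ ^ L ≤ 1 := pow_le_one₀ hγ0 hγ1
      have h3 : 0 ≤ ‖r‖ * cbb γ P a := mul_nonneg (norm_nonneg r) (cbb_nonneg hγ0 hP a)
      have h4 : |∑ c, Xmat γ P a c * yS γ P r (Atd n) 0 L c| ≤ ‖r‖ * cbb γ P a := by
        nlinarith [pow_nonneg hγ0 L]
      exact mul_le_mul_of_nonneg_right h4 hxq0
    have hbd := ydA_bound (r := r) hγ0 hγ1 hP a b L j
    rw [Finset.sum_range_succ]
    have habs : |sdA γ P r (Matrix.single a b 1) j L
          - ydA γ P r (Matrix.single a b 1) L j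
          + (∑ c, Xmat γ P a c * yS γ P r (Atd n) 0 L c) * xqv j b|
        ≤ |sdA γ P r (Matrix.single a b 1) j L|
          + |ydA γ P r (Matrix.single a b 1) L j|
          + |(∑ c, Xmat γ P a c * yS γ P r (Atd n) 0 L c) * xqv j b| := by
      refine le_trans (abs_add_le _ _) (add_le_add ?_ le_rfl)
      rw [sub_eq_add_neg]
      refine le_trans (abs_add_le _ _) ?_
      rw [abs_neg]
    push_cast
    push_cast at ih
    calc |sdA γ P r (Matrix.single a b 1) j L
          - ydA γ P r (Matrix.single a b 1) L j
          + (∑ c, Xmat γ P a c * yS γ P r (Atd n) 0 L c) * xqv j b|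
        ≤ ((∑ l ∈ Finset.range L, (l : ℝ)) * K + L * K2) + L * K + K2 := by
          refine le_trans habs ?_
          exact add_le_add (add_le_add ih hbd) hb2
      _ = ((∑ l ∈ Finset.range L, (l : ℝ)) + L) * K + (L + 1) * K2 := by ring


lemma ydU_bound (hγ0 : 0 ≤ γ) (hγ1 : γ ≤ 1) (hP : RowStochastic P)
    (k : TwoN n) : ∀ (l : ℕ) (c : Fin n),
    |ydU γ P r k l c| ≤ l * ((1 + γ) * Xb γ k) := by
  intro l
  set K := (1 + γ) * Xb γ k with hK
  have hXb0 : 0 ≤ Xb γ k := Xb_nonneg hγ0 k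
  have hK0 : 0 ≤ K := mul_nonneg (by linarith) hXb0
  induction l with
  | zero => intro c; simp [ydU]
  | succ l ih =>
    intro c'
    rw [ydU_succ]
    have hterm : ∀ c, |ydU γ P r k l c + Xmat γ P k c| ≤ l * K + Xb γ k := by
      intro c
      refine le_trans (abs_add_le _ _) (add_le_add (ih c) (absX_le hγ0 hP k c))
    have hb1 : |γ * (∑ c, P c' c * (ydU γ P r k l c + Xmat γ P k c))|
        ≤ γ * (l * K + Xb γ k) := by
      rw [abs_mul, abs_of_nonneg hγ0]
      refine mul_le_mul_of_nonneg_left ?_ hγ0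
      calc |∑ c, P c' c * (ydU γ P r k l c + Xmat γ P k c)|
          ≤ ∑ c, |P c' c * (ydU γ P r k l c + Xmat γ P k c)| := Finset.abs_sum_le_sum_abs _ _
        _ ≤ ∑ c, P c' c * (l * K + Xb γ k) := by
            refine Finset.sum_le_sum fun c _ => ?_
            rw [abs_mul, abs_of_nonneg (hP.1 c' c)]
            exact mul_le_mul_of_nonneg_left (hterm c) (hP.1 c' c)
        _ = l * K + Xb γ k := by rw [← Finset.sum_mul, hP.2 c', one_mul]
    calc |γ * (∑ c, P c' c * (ydU γ P r k l c + Xmat γ P k c)) - Xmat γ P k c'|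
        ≤ |γ * (∑ c, P c' c * (ydU γ P r k l c + Xmat γ P k c))| + |Xmat γ P k c'| := by
          rw [sub_eq_add_neg]
          refine le_trans (abs_add_le _ _) ?_
          rw [abs_neg]
      _ ≤ γ * (l * K + Xb γ k) + Xb γ k := add_le_add hb1 (absX_le hγ0 hP k c')
      _ ≤ (l + 1 : ℕ) * K := by
          push_cast
          rw [hK]
          nlinarith [mul_nonneg (Nat.cast_nonneg (α := ℝ) l)
            (mul_nonneg (add_nonneg zero_le_one hγ0) hXb0)]

lemma sdU_bound (hγ0 : 0 ≤ γ) (hγ1 : γ ≤ 1) (hP : RowStochastic P)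
    (k : TwoN n) (j : Fin n) : ∀ (L : ℕ),
    |sdU γ P r k j L|
      ≤ (∑ l ∈ Finset.range L, (l : ℝ)) * ((1 + γ) * Xb γ k) + L * Xb γ k := by
  intro L
  set K := (1 + γ) * Xb γ k with hK
  have hXb0 : 0 ≤ Xb γ k := Xb_nonneg hγ0 k
  induction L with
  | zero => simp [sdU]
  | succ L ih =>
    rw [sdU_succ, Finset.sum_range_succ]
    have hbd := ydU_bound (r := r) hγ0 hγ1 hP k L j
    push_cast
    calc |sdU γ P r k j L - (ydU γ P r k L j + Xmat γ P k j)|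
        ≤ |sdU γ P r k j L| + (|ydU γ P r k L j| + |Xmat γ P k j|) := by
          rw [sub_eq_add_neg]
          refine le_trans (abs_add_le _ _) ?_
          rw [abs_neg]
          exact add_le_add le_rfl (abs_add_le _ _)
      _ ≤ ((∑ l ∈ Finset.range L, (l : ℝ)) * K + L * Xb γ k) + (L * K + Xb γ k) := by
          refine add_le_add ih (add_le_add hbd (absX_le hγ0 hP k j))
      _ = ((∑ l ∈ Finset.range L, (l : ℝ)) + L) * K + (L + 1) * Xb γ k := by ring


lemma Pmv_bound (hP : RowStochastic P) (x : Fin n → ℝ) (i : Fin n) :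
    |P.mulVec x i| ≤ ‖x‖ := by
  calc |P.mulVec x i| = |∑ c, P i c * x c| := rfl
    _ ≤ ∑ c, |P i c * x c| := Finset.abs_sum_le_sum_abs _ _
    _ ≤ ∑ c, P i c * ‖x‖ := by
        refine Finset.sum_le_sum fun c _ => ?_
        rw [abs_mul, abs_of_nonneg (hP.1 i c)]
        refine mul_le_mul_of_nonneg_left ?_ (hP.1 i c)
        simpa using norm_le_pi_norm x c
    _ = ‖x‖ := by rw [← Finset.sum_mul, hP.2 i, one_mul]

lemma r_le_v (hn : 1 ≤ n) (hγ0 : 0 ≤ γ) (hγ1 : γ < 1) (hP : RowStochastic P) :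
    ‖r‖ ≤ (1 + γ) * ‖valueV γ P r‖ := by
  have hne : Nonempty (Fin n) := ⟨⟨0, hn⟩⟩
  set A := (1 : Matrix (Fin n) (Fin n) ℝ) - γ • P with hA
  have hAv : ∀ z : Fin n → ℝ, A.mulVec z = z - γ • P.mulVec z := by
    intro z
    rw [hA, Matrix.sub_mulVec, Matrix.one_mulVec, Matrix.smul_mulVec]
  have hker : ∀ z, A.mulVec z = 0 → z = 0 := by
    intro z hz
    rw [hAv z, sub_eq_zero] at hz
    obtain ⟨i0, _, hmax⟩ := Finset.exists_max_image Finset.univ (fun i => |z i|)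
      Finset.univ_nonempty
    have hz0 : |z i0| ≤ γ * |z i0| := by
      conv_lhs => rw [hz]
      simp only [Pi.smul_apply, smul_eq_mul]
      rw [abs_mul, abs_of_nonneg hγ0]
      refine mul_le_mul_of_nonneg_left ?_ hγ0
      calc |P.mulVec z i0| = |∑ c, P i0 c * z c| := rfl
        _ ≤ ∑ c, |P i0 c * z c| := Finset.abs_sum_le_sum_abs _ _
        _ ≤ ∑ c, P i0 c * |z i0| := by
            refine Finset.sum_le_sum fun c _ => ?_
            rw [abs_mul, abs_of_nonneg (hP.1 i0 c)]
            exact mul_le_mul_of_nonneg_left (hmax c (Finset.mem_univ c)) (hP.1 i0 c)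
        _ = |z i0| := by rw [← Finset.sum_mul, hP.2 i0, one_mul]
    have hmax0 : |z i0| ≤ 0 := by nlinarith [abs_nonneg (z i0)]
    funext i
    have := hmax i (Finset.mem_univ i)
    have : |z i| ≤ 0 := le_trans this hmax0
    have := abs_nonneg (z i)
    simp only [Pi.zero_apply]
    have : |z i| = 0 := le_antisymm ‹|z i| ≤ 0› (abs_nonneg _)
    exact abs_eq_zero.mp this
  have hinj : Function.Injective A.mulVec := by
    intro x y hxy
    have h0 : A.mulVec (x - y) = 0 := by rw [Matrix.mulVec_sub, hxy, sub_self]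
    have := hker _ h0
    exact sub_eq_zero.mp this
  have hunit : IsUnit A := Matrix.mulVec_injective_iff_isUnit.mp hinj
  have hr : A.mulVec (valueV γ P r) = r := by
    rw [valueV, ← hA, Matrix.mulVec_mulVec,
      Matrix.mul_nonsing_inv _ ((Matrix.isUnit_iff_isUnit_det A).mp hunit), Matrix.one_mulVec]
  conv_lhs => rw [← hr]
  refine (pi_norm_le_iff_of_nonneg ?_).mpr ?_
  · have := norm_nonneg (valueV γ P r)
    nlinarith
  · intro i
    rw [hAv]
    simp only [Pi.sub_apply, Pi.smul_apply, smul_eq_mul, Real.norm_eq_abs]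
    calc |valueV γ P r i - γ * P.mulVec (valueV γ P r) i|
        ≤ |valueV γ P r i| + γ * |P.mulVec (valueV γ P r) i| := by
          rw [sub_eq_add_neg]
          refine le_trans (abs_add_le _ _) ?_
          rw [abs_neg, abs_mul, abs_of_nonneg hγ0]
      _ ≤ ‖valueV γ P r‖ + γ * ‖valueV γ P r‖ := by
          refine add_le_add ?_ (mul_le_mul_of_nonneg_left (Pmv_bound hP _ i) hγ0)
          simpa using norm_le_pi_norm (valueV γ P r) i
      _ = (1 + γ) * ‖valueV γ P r‖ := by ring


lemma sum_xqv (ω : Fin n) : ∑ b : TwoN n, xqv ω b = 1 := by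
  rw [Fintype.sum_sum_type]
  simp [xqv, Finset.sum_ite_eq']

lemma gauss (L : ℕ) : 2 * ∑ l ∈ Finset.range L, (l : ℝ) = (L : ℝ) ^ 2 - L := by
  induction L with
  | zero => simp
  | succ L ih =>
    rw [Finset.sum_range_succ]
    push_cast
    push_cast at ih
    ring_nf
    ring_nf at ih
    linarith

lemma gsum_bound (hγ0 : 0 ≤ γ) (hγ1 : γ ≤ 1) (hP : RowStochastic P) (L : ℕ) (ω : Fin n) :
    ∑ idx : (TwoN n × TwoN n) ⊕ TwoN n, |gvec γ P r L ω idx|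
      ≤ ((∑ l ∈ Finset.range L, (l : ℝ)) * (‖r‖ * (n * (1 + γ)) * (n * (1 + γ)))
          + L * (‖r‖ * (n * (1 + γ))))
        + ((∑ l ∈ Finset.range L, (l : ℝ)) * ((1 + γ) * (n * (1 + γ)))
          + L * (n * (1 + γ))) := by
  set S := ∑ l ∈ Finset.range L, (l : ℝ) with hSdef
  set R := ‖r‖ with hRdef
  rw [Fintype.sum_sum_type]
  have hA : ∑ ab : TwoN n × TwoN n, |gvec γ P r L ω (Sum.inl ab)|
      ≤ S * (R * (n * (1 + γ)) * (n * (1 + γ))) + L * (R * (n * (1 + γ))) := by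
    have habA : ∀ ab : TwoN n × TwoN n, |gvec γ P r L ω (Sum.inl ab)|
        ≤ S * (R * cbb γ P ab.1 * Xb γ ab.2) + L * (R * cbb γ P ab.1 * xqv ω ab.2) := by
      intro ab
      rw [gvec_inl, abs_neg]
      exact sdA_bound (r := r) hγ0 hγ1 hP ab.1 ab.2 ω L
    calc ∑ ab : TwoN n × TwoN n, |gvec γ P r L ω (Sum.inl ab)|
        ≤ ∑ ab : TwoN n × TwoN n,
            (S * (R * cbb γ P ab.1 * Xb γ ab.2) + L * (R * cbb γ P ab.1 * xqv ω ab.2)) :=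
          Finset.sum_le_sum fun ab _ => habA ab
      _ = S * (R * (n * (1 + γ)) * (n * (1 + γ))) + L * (R * (n * (1 + γ))) := by
          rw [Fintype.sum_prod_type]
          have inner : ∀ a : TwoN n, ∑ b : TwoN n,
              (S * (R * cbb γ P a * Xb γ b) + L * (R * cbb γ P a * xqv ω b))
              = (S * R * (n * (1 + γ)) + L * R) * cbb γ P a := by
            intro a
            rw [Finset.sum_add_distrib]
            have e1 : ∑ b : TwoN n, S * (R * cbb γ P a * Xb γ b)
                = S * R * cbb γ P a * ∑ b : TwoN n, Xb γ b := by
              rw [Finset.mul_sum]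
              exact Finset.sum_congr rfl fun b _ => by ring
            have e2 : ∑ b : TwoN n, L * (R * cbb γ P a * xqv ω b)
                = (L : ℝ) * R * cbb γ P a * ∑ b : TwoN n, xqv ω b := by
              rw [Finset.mul_sum]
              exact Finset.sum_congr rfl fun b _ => by ring
            rw [e1, e2, sum_Xb, sum_xqv]
            ring
          rw [Finset.sum_congr rfl fun a _ => inner a, ← Finset.mul_sum, sum_cbb hP]
          ring
  have hU : ∑ k : TwoN n, |gvec γ P r L ω (Sum.inr k)|
      ≤ S * ((1 + γ) * (n * (1 + γ))) + L * (n * (1 + γ)) := by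
    have habU : ∀ k : TwoN n, |gvec γ P r L ω (Sum.inr k)|
        ≤ S * ((1 + γ) * Xb γ k) + L * Xb γ k := by
      intro k
      rw [gvec_inr, abs_neg]
      exact sdU_bound (r := r) hγ0 hγ1 hP k ω L
    calc ∑ k : TwoN n, |gvec γ P r L ω (Sum.inr k)|
        ≤ ∑ k : TwoN n, (S * ((1 + γ) * Xb γ k) + L * Xb γ k) :=
          Finset.sum_le_sum fun k _ => habU k
      _ = S * ((1 + γ) * (n * (1 + γ))) + L * (n * (1 + γ)) := by
          rw [Finset.sum_add_distrib]
          have e1 : ∑ k : TwoN n, S * ((1 + γ) * Xb γ k)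
              = S * (1 + γ) * ∑ k : TwoN n, Xb γ k := by
            rw [Finset.mul_sum]
            exact Finset.sum_congr rfl fun k _ => by ring
          have e2 : ∑ k : TwoN n, (L : ℝ) * Xb γ k = (L : ℝ) * ∑ k : TwoN n, Xb γ k :=
            (Finset.mul_sum _ _ _).symm
          rw [e1, e2, sum_Xb]
          ring
  exact add_le_add hA hU

end S16

set_option maxHeartbeats 1000000 in
/-- quantitative bound on the expected TD semi-gradient of the looped
L-layer transformer at the TD parameters. -/
theorem stmt16 (n : ℕ) (hn : 1 ≤ n) (γ : ℝ) (hγ0 : 0 ≤ γ) (hγ1 : γ < 1)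
    (P : Matrix (Fin n) (Fin n) ℝ) (hP : RowStochastic P) (r : Fin n → ℝ)
    (L : ℕ) (ρ : Fin n → ℝ) (hρ0 : ∀ ω, 0 ≤ ρ ω) (hρ1 : ∑ ω, ρ ω = 1) :
    ∑ idx : (TwoN n × TwoN n) ⊕ TwoN n,
        |∑ ω, (ρ ω * ∑ j, P ω j * (r ω + γ * tfTD γ P r j L - tfTD γ P r ω L)) *
          gvec γ P r L ω idx|
      ≤ ‖r‖ * γ ^ L *
          ((((L : ℝ) ^ 2 + L) / 2) *
              (2 * (n : ℝ) * ((n : ℝ) * (1 + γ) ^ 2 * ‖valueV γ P r‖ + (1 + γ) ^ 2))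
            + (L : ℝ) * (2 * (n : ℝ) * (1 + γ))) := by
  classical
  have hγ1' : γ ≤ 1 := le_of_lt hγ1
  set V := ‖valueV γ P r‖ with hV
  set R := ‖r‖ with hR
  have hV0 : 0 ≤ V := norm_nonneg _
  have hR0 : 0 ≤ R := norm_nonneg _
  have hRV : R ≤ (1 + γ) * V := S16.r_le_v hn hγ0 hγ1 hP
  set S := ∑ l ∈ Finset.range L, (l : ℝ) with hSdef
  have hS0 : 0 ≤ S := Finset.sum_nonneg fun l _ => Nat.cast_nonneg l
  have hS2 : 2 * S = (L : ℝ) ^ 2 - L := S16.gauss L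
  have hg0' : (0:ℝ) ≤ 1 + γ := by linarith
  have hg2 : (1:ℝ) + γ ≤ 2 := by linarith
  have hN1 : (1:ℝ) ≤ (n:ℝ) := by exact_mod_cast hn
  have hN0 : (0:ℝ) ≤ (n:ℝ) := by linarith
  have hL0 : (0:ℝ) ≤ (L:ℝ) := Nat.cast_nonneg L
  set GB := (S * (R * ((n:ℝ) * (1 + γ)) * ((n:ℝ) * (1 + γ))) + (L:ℝ) * (R * ((n:ℝ) * (1 + γ))))
      + (S * ((1 + γ) * ((n:ℝ) * (1 + γ))) + (L:ℝ) * ((n:ℝ) * (1 + γ))) with hGB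
  have hcoeff : ∀ ω, |ρ ω * ∑ j, P ω j * (r ω + γ * tfTD γ P r j L - tfTD γ P r ω L)|
      ≤ ρ ω * (γ ^ L * R) := by
    intro ω
    rw [abs_mul, abs_of_nonneg (hρ0 ω)]
    refine mul_le_mul_of_nonneg_left ?_ (hρ0 ω)
    rw [S16.coeff_eq γ P hP r L ω]
    exact S16.y0_bound hγ0 hγ1' hP L ω
  have hmain : ∑ idx : (TwoN n × TwoN n) ⊕ TwoN n,
        |∑ ω, (ρ ω * ∑ j, P ω j * (r ω + γ * tfTD γ P r j L - tfTD γ P r ω L)) *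
          gvec γ P r L ω idx|
      ≤ (γ ^ L * R) * GB := by
    calc ∑ idx : (TwoN n × TwoN n) ⊕ TwoN n,
          |∑ ω, (ρ ω * ∑ j, P ω j * (r ω + γ * tfTD γ P r j L - tfTD γ P r ω L)) *
            gvec γ P r L ω idx|
        ≤ ∑ idx : (TwoN n × TwoN n) ⊕ TwoN n,
            ∑ ω, |(ρ ω * ∑ j, P ω j * (r ω + γ * tfTD γ P r j L - tfTD γ P r ω L)) *
              gvec γ P r L ω idx| :=
          Finset.sum_le_sum fun idx _ => Finset.abs_sum_le_sum_abs _ _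
      _ = ∑ ω, ∑ idx : (TwoN n × TwoN n) ⊕ TwoN n,
            |ρ ω * ∑ j, P ω j * (r ω + γ * tfTD γ P r j L - tfTD γ P r ω L)|
              * |gvec γ P r L ω idx| := by
          rw [Finset.sum_comm]
          exact Finset.sum_congr rfl fun ω _ => Finset.sum_congr rfl fun idx _ => abs_mul _ _
      _ = ∑ ω, |ρ ω * ∑ j, P ω j * (r ω + γ * tfTD γ P r j L - tfTD γ P r ω L)|
            * ∑ idx : (TwoN n × TwoN n) ⊕ TwoN n, |gvec γ P r L ω idx| :=
          Finset.sum_congr rfl fun ω _ => (Finset.mul_sum _ _ _).symm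
      _ ≤ ∑ ω, (ρ ω * (γ ^ L * R)) * GB := by
          refine Finset.sum_le_sum fun ω _ => ?_
          refine mul_le_mul (hcoeff ω) (S16.gsum_bound (r := r) hγ0 hγ1' hP L ω)
            (Finset.sum_nonneg fun idx _ => abs_nonneg _)
            (mul_nonneg (hρ0 ω) (mul_nonneg (pow_nonneg hγ0 L) hR0))
      _ = (γ ^ L * R) * GB := by
          rw [← Finset.sum_mul, ← Finset.sum_mul, hρ1, one_mul]
  refine le_trans hmain ?_
  have c1 : S * R ≤ ((L : ℝ) ^ 2 - L) * V := by
    nlinarith [mul_le_mul_of_nonneg_left hRV hS0,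
      mul_nonneg (mul_nonneg (sub_nonneg.mpr hg2) hS0) hV0]
  have hq0 : (0:ℝ) ≤ ((n:ℝ) * (1 + γ)) * ((n:ℝ) * (1 + γ)) :=
    mul_nonneg (mul_nonneg hN0 hg0') (mul_nonneg hN0 hg0')
  have t1 : S * (R * ((n:ℝ) * (1 + γ)) * ((n:ℝ) * (1 + γ)))
      ≤ (((L : ℝ) ^ 2 - L) * V) * (((n:ℝ) * (1 + γ)) * ((n:ℝ) * (1 + γ))) := by
    calc S * (R * ((n:ℝ) * (1 + γ)) * ((n:ℝ) * (1 + γ)))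
        = (S * R) * (((n:ℝ) * (1 + γ)) * ((n:ℝ) * (1 + γ))) := by ring
      _ ≤ (((L : ℝ) ^ 2 - L) * V) * (((n:ℝ) * (1 + γ)) * ((n:ℝ) * (1 + γ))) :=
          mul_le_mul_of_nonneg_right c1 hq0
  have c2 : R * ((n:ℝ) * (1 + γ)) ≤ V * (((n:ℝ) * (1 + γ)) * ((n:ℝ) * (1 + γ))) := by
    nlinarith [mul_le_mul_of_nonneg_right hRV (mul_nonneg hN0 hg0'),
      mul_nonneg (mul_nonneg hV0 (mul_nonneg hN0 hg0'))
        (mul_nonneg (sub_nonneg.mpr hN1) hg0'), hV0, hg0', hN0]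
  have t2 : (L:ℝ) * (R * ((n:ℝ) * (1 + γ)))
      ≤ (L:ℝ) * (V * (((n:ℝ) * (1 + γ)) * ((n:ℝ) * (1 + γ)))) :=
    mul_le_mul_of_nonneg_left c2 hL0
  have t3 : S * ((1 + γ) * ((n:ℝ) * (1 + γ)))
      ≤ (((L : ℝ) ^ 2 + L) / 2) * ((1 + γ) * ((n:ℝ) * (1 + γ))) := by
    refine mul_le_mul_of_nonneg_right ?_ (mul_nonneg hg0' (mul_nonneg hN0 hg0'))
    nlinarith [hL0]
  have hbig : GB ≤ ((((L : ℝ) ^ 2 + L) / 2) *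
        (2 * (n : ℝ) * ((n : ℝ) * (1 + γ) ^ 2 * V + (1 + γ) ^ 2))
      + (L : ℝ) * (2 * (n : ℝ) * (1 + γ))) := by
    rw [hGB]
    have hLVq : (0:ℝ) ≤ (L:ℝ) * (V * (((n:ℝ) * (1 + γ)) * ((n:ℝ) * (1 + γ)))) :=
      mul_nonneg hL0 (mul_nonneg hV0 hq0)
    have hLNg : (0:ℝ) ≤ (L:ℝ) * ((n:ℝ) * (1 + γ)) :=
      mul_nonneg hL0 (mul_nonneg hN0 hg0')
    have hT3q : (0:ℝ) ≤ (((L:ℝ) ^ 2 + L) / 2) * ((1 + γ) * ((n:ℝ) * (1 + γ))) := by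
      have h1 : (0:ℝ) ≤ ((L:ℝ) ^ 2 + L) / 2 := by positivity
      exact mul_nonneg h1 (mul_nonneg hg0' (mul_nonneg hN0 hg0'))
    linarith [t1, t2, t3, hLVq, hLNg, hT3q]
  calc (γ ^ L * R) * GB
      ≤ (γ ^ L * R) * ((((L : ℝ) ^ 2 + L) / 2) *
          (2 * (n : ℝ) * ((n : ℝ) * (1 + γ) ^ 2 * V + (1 + γ) ^ 2))
        + (L : ℝ) * (2 * (n : ℝ) * (1 + γ))) :=
        mul_le_mul_of_nonneg_left hbig (mul_nonneg (pow_nonneg hγ0 L) hR0)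
    _ = R * γ ^ L * ((((L : ℝ) ^ 2 + L) / 2) *
          (2 * (n : ℝ) * ((n : ℝ) * (1 + γ) ^ 2 * V + (1 + γ) ^ 2))
        + (L : ℝ) * (2 * (n : ℝ) * (1 + γ))) := by ring

end
end

section
/- (Theorem 2) lim_{L→∞} J(θ_L^TD) = 0, where J(θ_L^TD) = ‖Δ_L^TD‖_1 is the ℓ1 norm of the expected multi-task TD update Δ_L^TD = E_{(P,r)∼μ}[ Σ_{ω=1}^n ρ_P(ω) Σ_{j=1}^n P_{ωj} ( r_ω + γ F_L^{(j)}(A^TD, 0) − F_L^{(ω)}(A^TD, 0) ) g_L(ω) ] of the looped Transformer evaluated at the TD parameters; i.e., the TD parameters are a global minimizer of the norm-of-expected-update pretraining loss in the limit of infinitely many layers. -/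
open Matrix Filter Topology

noncomputable section

-- auxiliary development
def XtF (n : ℕ) (γ : ℝ) (P : Matrix (Fin n) (Fin n) ℝ) (j : Fin n) : TwoN n → CIdx n → ℝ
  | Sum.inl k, Sum.inl i => if k = i then 1 else 0
  | Sum.inr k, Sum.inl i => γ * P i k
  | Sum.inl k, Sum.inr _ => if k = j then 1 else 0
  | Sum.inr _, Sum.inr _ => 0

def SAf (n : ℕ) (γ : ℝ) (P : Matrix (Fin n) (Fin n) ℝ) (j : Fin n)
    (A : Matrix (TwoN n) (TwoN n) ℝ) : Fin n → CIdx n → ℝ := fun i q =>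
  ∑ b, (∑ a, XtF n γ P j a (Sum.inl i) * A a b) * XtF n γ P j b q

def vuf (n : ℕ) (γ : ℝ) (P : Matrix (Fin n) (Fin n) ℝ) (j : Fin n)
    (u : Matrix Unit (TwoN n) ℝ) : Fin n → ℝ := fun i =>
  ∑ a, u () a * XtF n γ P j a (Sum.inl i)

def csGen (n : ℕ) (r : Fin n → ℝ) (S : Fin n → CIdx n → ℝ) (v : Fin n → ℝ) :
    ℕ → (Fin n → ℝ) × ℝ
  | 0 => (r, 0)
  | l + 1 =>
    (fun i' => (csGen n r S v l).1 i' + ∑ i, (v i + (csGen n r S v l).1 i) * S i (Sum.inl i'),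
      (csGen n r S v l).2 + ∑ i, (v i + (csGen n r S v l).1 i) * S i (Sum.inr ()))

def closedZ (n : ℕ) (γ : ℝ) (P : Matrix (Fin n) (Fin n) ℝ) (j : Fin n)
    (c : Fin n → ℝ) (s : ℝ) : Matrix (RIdx n) (CIdx n) ℝ :=
  Matrix.of fun p q => match p, q with
  | Sum.inl a, q => XtF n γ P j a q
  | Sum.inr _, Sum.inl i => c i
  | Sum.inr _, Sum.inr _ => s

@[simp] lemma closedZ_inl (n γ P j c s a q) : closedZ n γ P j c s (Sum.inl a) q = XtF n γ P j a q := rfl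
@[simp] lemma closedZ_inr_inl (n γ P j c s u i) : closedZ n γ P j c s (Sum.inr u) (Sum.inl i) = c i := rfl
@[simp] lemma closedZ_inr_inr (n γ P j c s u u') : closedZ n γ P j c s (Sum.inr u) (Sum.inr u') = s := rfl

section comp
variable (n : ℕ) (γ : ℝ) (P : Matrix (Fin n) (Fin n) ℝ) (j : Fin n)
  (A : Matrix (TwoN n) (TwoN n) ℝ) (u : Matrix Unit (TwoN n) ℝ) (c : Fin n → ℝ) (s : ℝ)

lemma T_apply (q' q : CIdx n) :
    ((closedZ n γ P j c s)ᵀ * Qmat n A * closedZ n γ P j c s) q' q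
      = ∑ b, (∑ a, XtF n γ P j a q' * A a b) * XtF n γ P j b q := by
  simp only [Matrix.mul_apply, Matrix.transpose_apply, Fintype.sum_sum_type, Qmat,
    Matrix.fromBlocks_apply₁₁, Matrix.fromBlocks_apply₁₂, Matrix.fromBlocks_apply₂₁,
    Matrix.fromBlocks_apply₂₂, Matrix.zero_apply, mul_zero, zero_mul, Finset.sum_const_zero,
    add_zero, Fintype.sum_unique, closedZ_inl]

lemma PZ_inl (a : TwoN n) (q : CIdx n) :
    (Pmat n u * closedZ n γ P j c s) (Sum.inl a) q = 0 := by
  simp [Matrix.mul_apply, Fintype.sum_sum_type, Pmat]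

lemma PZ_inr_inl (i : Fin n) :
    (Pmat n u * closedZ n γ P j c s) (Sum.inr ()) (Sum.inl i) = vuf n γ P j u i + c i := by
  simp [Matrix.mul_apply, Fintype.sum_sum_type, Pmat, vuf, Matrix.one_apply]

lemma PZM_inl (a : TwoN n) (q : CIdx n) :
    (Pmat n u * closedZ n γ P j c s * maskM n) (Sum.inl a) q = 0 := by
  rw [Matrix.mul_apply]
  simp [PZ_inl]

lemma PZM_inr (q : CIdx n) :
    (Pmat n u * closedZ n γ P j c s * maskM n) (Sum.inr ()) q
      = match q with | Sum.inl i => vuf n γ P j u i + c i | Sum.inr _ => 0 := by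
  cases q with
  | inl i =>
    rw [Matrix.mul_apply]
    simp [Fintype.sum_sum_type, maskM, Matrix.one_apply, PZ_inr_inl, Finset.sum_ite_eq']
  | inr u' =>
    rw [Matrix.mul_apply]
    simp [Fintype.sum_sum_type, maskM]

lemma attn_closed :
    attnLayer n (Pmat n u) (Qmat n A) (closedZ n γ P j c s) =
    closedZ n γ P j
      (fun i' => c i' + ∑ i, (vuf n γ P j u i + c i) * SAf n γ P j A i (Sum.inl i'))
      (s + ∑ i, (vuf n γ P j u i + c i) * SAf n γ P j A i (Sum.inr ())) := by
  funext p q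
  show (closedZ n γ P j c s + Pmat n u * closedZ n γ P j c s * maskM n *
      ((closedZ n γ P j c s)ᵀ * Qmat n A * closedZ n γ P j c s)) p q = _
  rw [Matrix.add_apply]
  rw [show (Pmat n u * closedZ n γ P j c s * maskM n *
      ((closedZ n γ P j c s)ᵀ * Qmat n A * closedZ n γ P j c s)) p q
    = ∑ q', (Pmat n u * closedZ n γ P j c s * maskM n) p q' *
        (((closedZ n γ P j c s)ᵀ * Qmat n A * closedZ n γ P j c s)) q' q from Matrix.mul_apply]
  cases p with
  | inl a => simp [PZM_inl]
  | inr u' =>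
    cases u'
    simp only [Fintype.sum_sum_type, Fintype.sum_unique, PZM_inr, T_apply, zero_mul,
      Finset.sum_const_zero, add_zero]
    cases q with
    | inl i =>
      simp only [SAf, T_apply, closedZ_inr_inl]
      simp only [Finset.sum_mul, add_mul, Fintype.sum_sum_type]
    | inr u'' =>
      cases u''
      simp only [SAf, T_apply, closedZ_inr_inr]
      simp only [Finset.sum_mul, add_mul, Fintype.sum_sum_type]

end comp


section comp2
variable (n : ℕ) (γ : ℝ) (P : Matrix (Fin n) (Fin n) ℝ) (r : Fin n → ℝ) (j : Fin n)

lemma prompt_eq : prompt γ P r j = closedZ n γ P j r 0 := by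
  funext p q
  rcases p with (k | k) | u <;> rcases q with i | u' <;> rfl

lemma embed_eq (A : Matrix (TwoN n) (TwoN n) ℝ) (u : Matrix Unit (TwoN n) ℝ) (l : ℕ) :
    embed γ P r j A u l
      = closedZ n γ P j (csGen n r (SAf n γ P j A) (vuf n γ P j u) l).1
          (csGen n r (SAf n γ P j A) (vuf n γ P j u) l).2 := by
  induction l with
  | zero => simpa [embed, csGen] using prompt_eq n γ P r j
  | succ l ih =>
    show attnLayer n (Pmat n u) (Qmat n A) (embed γ P r j A u l) = _
    rw [ih, attn_closed]
    rfl

lemma SAf_Atd (i : Fin n) (q : CIdx n) :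
    SAf n γ P j (Atd n) i q = -XtF n γ P j (Sum.inl i) q + XtF n γ P j (Sum.inr i) q := by
  simp only [SAf, Atd, Fintype.sum_sum_type, Matrix.fromBlocks_apply₁₁,
    Matrix.fromBlocks_apply₁₂, Matrix.fromBlocks_apply₂₁, Matrix.fromBlocks_apply₂₂,
    Matrix.zero_apply, mul_zero, zero_mul, Finset.sum_const_zero, add_zero,
    Matrix.neg_apply, Matrix.one_apply]
  simp [XtF, mul_ite, mul_one, mul_zero, mul_neg, ite_mul, one_mul, zero_mul,
    Finset.sum_ite_eq', Finset.sum_ite_eq]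

lemma SAf_Atd_inl (i i' : Fin n) :
    SAf n γ P j (Atd n) i (Sum.inl i') = γ * P i' i - (if i = i' then 1 else 0) := by
  rw [SAf_Atd]
  show -(if i = i' then (1:ℝ) else 0) + γ * P i' i = _
  ring

lemma SAf_Atd_inr (i : Fin n) :
    SAf n γ P j (Atd n) i (Sum.inr ()) = -(if i = j then 1 else 0) := by
  rw [SAf_Atd]
  show -(if i = j then (1:ℝ) else 0) + 0 = _
  ring

lemma vuf_zero : vuf n γ P j 0 = 0 := by
  funext i; simp [vuf]

lemma c0_succ (l : ℕ) :
    (csGen n r (SAf n γ P j (Atd n)) 0 (l + 1)).1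
      = fun i' => γ * ∑ i, P i' i * (csGen n r (SAf n γ P j (Atd n)) 0 l).1 i := by
  funext i'
  show (csGen n r (SAf n γ P j (Atd n)) 0 l).1 i'
      + ∑ i, ((0 : Fin n → ℝ) i + (csGen n r (SAf n γ P j (Atd n)) 0 l).1 i)
          * SAf n γ P j (Atd n) i (Sum.inl i') = _
  simp only [Pi.zero_apply, zero_add, SAf_Atd_inl, mul_sub, mul_ite, mul_one, mul_zero,
    Finset.sum_sub_distrib, Finset.sum_ite_eq', Finset.mem_univ, if_true]
  have h : ∑ i, (csGen n r (SAf n γ P j (Atd n)) 0 l).1 i * (γ * P i' i)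
      = γ * ∑ i, P i' i * (csGen n r (SAf n γ P j (Atd n)) 0 l).1 i := by
    rw [Finset.mul_sum]; exact Finset.sum_congr rfl fun i _ => by ring
  rw [h]; ring

lemma s0_succ (l : ℕ) :
    (csGen n r (SAf n γ P j (Atd n)) 0 (l + 1)).2
      = (csGen n r (SAf n γ P j (Atd n)) 0 l).2
        - (csGen n r (SAf n γ P j (Atd n)) 0 l).1 j := by
  show (csGen n r (SAf n γ P j (Atd n)) 0 l).2
      + ∑ i, ((0 : Fin n → ℝ) i + (csGen n r (SAf n γ P j (Atd n)) 0 l).1 i)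
          * SAf n γ P j (Atd n) i (Sum.inr ()) = _
  simp only [Pi.zero_apply, zero_add, SAf_Atd_inr, mul_neg, mul_ite, mul_one, mul_zero,
    Finset.sum_neg_distrib, Finset.sum_ite_eq', Finset.mem_univ, if_true]
  ring

lemma tdW_eq_sum (L : ℕ) :
    tdW γ P r L = fun i => ∑ l ∈ Finset.range L, (csGen n r (SAf n γ P j (Atd n)) 0 l).1 i := by
  induction L with
  | zero => funext i; simp [tdW]
  | succ L ih =>
    funext i
    have hmv : tdW γ P r (L + 1) i = r i + γ * ∑ k, P i k * tdW γ P r L k := by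
      show (r + γ • P.mulVec (tdW γ P r L)) i = _
      simp [Matrix.mulVec, dotProduct]
    rw [hmv, ih]
    simp only []
    rw [Finset.sum_range_succ']
    have h1 : ∀ l ∈ Finset.range L,
        (csGen n r (SAf n γ P j (Atd n)) 0 (l + 1)).1 i
          = γ * ∑ k, P i k * (csGen n r (SAf n γ P j (Atd n)) 0 l).1 k := by
      intro l _
      rw [c0_succ]
    rw [Finset.sum_congr rfl h1]
    have h2 : ∑ k, P i k * ∑ l ∈ Finset.range L, (csGen n r (SAf n γ P j (Atd n)) 0 l).1 k
        = ∑ l ∈ Finset.range L, ∑ k, P i k * (csGen n r (SAf n γ P j (Atd n)) 0 l).1 k := by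
      simp_rw [Finset.mul_sum]
      exact Finset.sum_comm
    rw [h2, Finset.mul_sum]
    have h3 : (csGen n r (SAf n γ P j (Atd n)) 0 0).1 i = r i := rfl
    rw [h3]
    ring

lemma s0_eq_sum (L : ℕ) :
    (csGen n r (SAf n γ P j (Atd n)) 0 L).2
      = -∑ l ∈ Finset.range L, (csGen n r (SAf n γ P j (Atd n)) 0 l).1 j := by
  induction L with
  | zero => simp [csGen]
  | succ L ih =>
    rw [s0_succ, ih, Finset.sum_range_succ]
    ring

lemma tfTD_eq (L : ℕ) : tfTD γ P r j L = tdW γ P r L j := by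
  show -(embed γ P r j (Atd n) 0 L (Sum.inr ()) (Sum.inr ())) = _
  rw [embed_eq, vuf_zero, closedZ_inr_inr, s0_eq_sum, tdW_eq_sum n γ P r j]
  simp

lemma c0_bound {R : ℝ} (hP : RowStochastic P) (hr : ∀ i, |r i| ≤ R)
    (hγ0 : 0 ≤ γ) (l : ℕ) (i : Fin n) :
    |(csGen n r (SAf n γ P j (Atd n)) 0 l).1 i| ≤ γ ^ l * R := by
  induction l generalizing i with
  | zero => simpa [csGen] using hr i
  | succ l ih =>
    rw [c0_succ]
    simp only []
    calc |γ * ∑ k, P i k * (csGen n r (SAf n γ P j (Atd n)) 0 l).1 k|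
        = γ * |∑ k, P i k * (csGen n r (SAf n γ P j (Atd n)) 0 l).1 k| := by
          rw [abs_mul, abs_of_nonneg hγ0]
      _ ≤ γ * ∑ k, P i k * (γ ^ l * R) := by
          apply mul_le_mul_of_nonneg_left _ hγ0
          calc |∑ k, P i k * (csGen n r (SAf n γ P j (Atd n)) 0 l).1 k|
              ≤ ∑ k, |P i k * (csGen n r (SAf n γ P j (Atd n)) 0 l).1 k| :=
                Finset.abs_sum_le_sum_abs _ _
            _ ≤ ∑ k, P i k * (γ ^ l * R) := by
                apply Finset.sum_le_sum
                intro k _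
                rw [abs_mul, abs_of_nonneg (hP.1 i k)]
                exact mul_le_mul_of_nonneg_left (ih k) (hP.1 i k)
      _ = γ ^ (l + 1) * R := by
          rw [← Finset.sum_mul, hP.2 i]
          ring

lemma tdW_diff (L : ℕ) (ω : Fin n) :
    tdW γ P r (L + 1) ω - tdW γ P r L ω = (csGen n r (SAf n γ P j (Atd n)) 0 L).1 ω := by
  rw [tdW_eq_sum n γ P r j, tdW_eq_sum n γ P r j]
  simp only []
  rw [Finset.sum_range_succ]
  ring

end comp2



section comp3
variable (n : ℕ) (r : Fin n → ℝ)

def dGen (S0 S1 : Fin n → CIdx n → ℝ) (v1 : Fin n → ℝ) : ℕ → (Fin n → ℝ) × ℝ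
  | 0 => (0, 0)
  | l + 1 =>
    (fun i' => (dGen S0 S1 v1 l).1 i'
        + ∑ i, ((v1 i + (dGen S0 S1 v1 l).1 i) * S0 i (Sum.inl i')
            + (csGen n r S0 0 l).1 i * S1 i (Sum.inl i')),
      (dGen S0 S1 v1 l).2
        + ∑ i, ((v1 i + (dGen S0 S1 v1 l).1 i) * S0 i (Sum.inr ())
            + (csGen n r S0 0 l).1 i * S1 i (Sum.inr ())))

lemma csGen_at_zero (S0 S1 : Fin n → CIdx n → ℝ) (v1 : Fin n → ℝ) (l : ℕ) :
    csGen n r (fun i q => S0 i q + (0:ℝ) * S1 i q) (fun i => (0:ℝ) * v1 i) l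
      = csGen n r S0 0 l := by
  have hS : (fun i q => S0 i q + (0:ℝ) * S1 i q) = S0 := by funext i q; simp
  have hv : (fun i => (0:ℝ) * v1 i) = (0 : Fin n → ℝ) := by funext i; simp
  rw [hS, hv]

lemma csGen_deriv (S0 S1 : Fin n → CIdx n → ℝ) (v1 : Fin n → ℝ) (l : ℕ) :
    (∀ i', HasDerivAt
        (fun t : ℝ => (csGen n r (fun i q => S0 i q + t * S1 i q) (fun i => t * v1 i) l).1 i')
        ((dGen n r S0 S1 v1 l).1 i') 0)
    ∧ HasDerivAt
        (fun t : ℝ => (csGen n r (fun i q => S0 i q + t * S1 i q) (fun i => t * v1 i) l).2)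
        ((dGen n r S0 S1 v1 l).2) 0 := by
  induction l with
  | zero =>
    constructor
    · intro i'
      simpa [csGen, dGen] using hasDerivAt_const (0:ℝ) (r i')
    · simpa [csGen, dGen] using hasDerivAt_const (0:ℝ) (0:ℝ)
  | succ l ih =>
    have hterm : ∀ (q : CIdx n) (i : Fin n), HasDerivAt
        (fun t : ℝ => ((fun i => t * v1 i) i
            + (csGen n r (fun i q => S0 i q + t * S1 i q) (fun i => t * v1 i) l).1 i)
          * ((fun i q => S0 i q + t * S1 i q) i q))
        ((v1 i + (dGen n r S0 S1 v1 l).1 i) * S0 i q + (csGen n r S0 0 l).1 i * S1 i q) 0 := by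
      intro q i
      have h1 : HasDerivAt
          (fun t : ℝ => t * v1 i
            + (csGen n r (fun i q => S0 i q + t * S1 i q) (fun i => t * v1 i) l).1 i)
          (v1 i + (dGen n r S0 S1 v1 l).1 i) 0 :=
        (hasDerivAt_mul_const (v1 i)).add (ih.1 i)
      have h2 : HasDerivAt (fun t : ℝ => S0 i q + t * S1 i q) (S1 i q) 0 := by
        exact (hasDerivAt_mul_const (S1 i q)).const_add (S0 i q)
      have h3 := h1.mul h2
      simp only [zero_mul, add_zero, zero_add, csGen_at_zero] at h3
      exact h3
    constructor
    · intro i'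
      have h4 : HasDerivAt
          (fun t : ℝ => (csGen n r (fun i q => S0 i q + t * S1 i q) (fun i => t * v1 i) l).1 i'
            + ∑ i, ((fun i => t * v1 i) i
                + (csGen n r (fun i q => S0 i q + t * S1 i q) (fun i => t * v1 i) l).1 i)
              * ((fun i q => S0 i q + t * S1 i q) i (Sum.inl i')))
          ((dGen n r S0 S1 v1 l).1 i'
            + ∑ i, ((v1 i + (dGen n r S0 S1 v1 l).1 i) * S0 i (Sum.inl i')
                + (csGen n r S0 0 l).1 i * S1 i (Sum.inl i'))) 0 :=
        (ih.1 i').add (HasDerivAt.fun_sum fun i _ => hterm (Sum.inl i') i)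
      exact h4
    · have h4 : HasDerivAt
          (fun t : ℝ => (csGen n r (fun i q => S0 i q + t * S1 i q) (fun i => t * v1 i) l).2
            + ∑ i, ((fun i => t * v1 i) i
                + (csGen n r (fun i q => S0 i q + t * S1 i q) (fun i => t * v1 i) l).1 i)
              * ((fun i q => S0 i q + t * S1 i q) i (Sum.inr ())))
          ((dGen n r S0 S1 v1 l).2
            + ∑ i, ((v1 i + (dGen n r S0 S1 v1 l).1 i) * S0 i (Sum.inr ())
                + (csGen n r S0 0 l).1 i * S1 i (Sum.inr ()))) 0 :=
        (ih.2).add (HasDerivAt.fun_sum fun i _ => hterm (Sum.inr ()) i)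
      exact h4

end comp3



section comp4
variable (n : ℕ) (γ : ℝ) (P : Matrix (Fin n) (Fin n) ℝ) (r : Fin n → ℝ) (j : Fin n)

lemma SAf_add_smul (A B : Matrix (TwoN n) (TwoN n) ℝ) (t : ℝ) :
    SAf n γ P j (A + t • B) = fun i q => SAf n γ P j A i q + t * SAf n γ P j B i q := by
  funext i q
  simp only [SAf, Matrix.add_apply, Matrix.smul_apply, smul_eq_mul, mul_add,
    Finset.sum_add_distrib, add_mul]
  congr 1
  rw [Finset.mul_sum]
  refine Finset.sum_congr rfl fun b _ => ?_
  rw [show (∑ a, XtF n γ P j a (Sum.inl i) * (t * B a b))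
      = t * ∑ a, XtF n γ P j a (Sum.inl i) * B a b from by
    rw [Finset.mul_sum]; exact Finset.sum_congr rfl fun a _ => by ring]
  ring

lemma vuf_smul (E : Matrix Unit (TwoN n) ℝ) (t : ℝ) :
    vuf n γ P j (t • E) = fun i => t * vuf n γ P j E i := by
  funext i
  simp only [vuf, Matrix.smul_apply, smul_eq_mul, Finset.mul_sum]
  exact Finset.sum_congr rfl fun a _ => by ring

lemma gvec_inl (L : ℕ) (a b : TwoN n) :
    gvec γ P r L j (Sum.inl (a, b))
      = -(dGen n r (SAf n γ P j (Atd n)) (SAf n γ P j (Matrix.single a b 1))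
          (0 : Fin n → ℝ) L).2 := by
  have hfun : (fun t : ℝ => tfOut γ P r j (Atd n + t • Matrix.single a b 1) 0 L)
      = fun t : ℝ => -(csGen n r
          (fun i q => SAf n γ P j (Atd n) i q + t * SAf n γ P j (Matrix.single a b 1) i q)
          (fun i => t * (0 : Fin n → ℝ) i) L).2 := by
    funext t
    show -(embed γ P r j (Atd n + t • Matrix.single a b 1) 0 L
        (Sum.inr ()) (Sum.inr ())) = _
    rw [embed_eq, closedZ_inr_inr, SAf_add_smul, vuf_zero]
    rw [show (fun i => t * (0 : Fin n → ℝ) i) = (0 : Fin n → ℝ) from by funext i; simp]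
  show deriv (fun t : ℝ => tfOut γ P r j (Atd n + t • Matrix.single a b 1) 0 L) 0 = _
  rw [hfun]
  exact (((csGen_deriv n r (SAf n γ P j (Atd n))
    (SAf n γ P j (Matrix.single a b 1)) (0 : Fin n → ℝ) L).2).neg).deriv

lemma gvec_inr (L : ℕ) (k : TwoN n) :
    gvec γ P r L j (Sum.inr k)
      = -(dGen n r (SAf n γ P j (Atd n)) (fun _ _ => (0:ℝ))
          (vuf n γ P j (Matrix.single () k 1)) L).2 := by
  have hfun : (fun t : ℝ => tfOut γ P r j (Atd n) (t • Matrix.single () k 1) L)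
      = fun t : ℝ => -(csGen n r
          (fun i q => SAf n γ P j (Atd n) i q + t * (fun _ _ => (0:ℝ)) i q)
          (fun i => t * vuf n γ P j (Matrix.single () k 1) i) L).2 := by
    funext t
    show -(embed γ P r j (Atd n) (t • Matrix.single () k 1) L
        (Sum.inr ()) (Sum.inr ())) = _
    rw [embed_eq, closedZ_inr_inr, vuf_smul]
    rw [show (fun i q => SAf n γ P j (Atd n) i q + t * (fun _ _ => (0:ℝ)) i q)
        = SAf n γ P j (Atd n) from by funext i q; simp]
  show deriv (fun t : ℝ => tfOut γ P r j (Atd n) (t • Matrix.single () k 1) L) 0 = _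
  rw [hfun]
  exact (((csGen_deriv n r (SAf n γ P j (Atd n)) (fun _ _ => (0:ℝ))
    (vuf n γ P j (Matrix.single () k 1)) L).2).neg).deriv

end comp4



section comp5
variable (n : ℕ) (γ : ℝ) (P : Matrix (Fin n) (Fin n) ℝ) (r : Fin n → ℝ) (j : Fin n) (R : ℝ)

lemma XtF_bound (hP : RowStochastic P) (hγ0 : 0 ≤ γ) (hγ1 : γ < 1) (a : TwoN n) (q : CIdx n) :
    |XtF n γ P j a q| ≤ 1 := by
  have hPle : ∀ i k, P i k ≤ 1 := by
    intro i k
    calc P i k ≤ ∑ k', P i k' :=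
          Finset.single_le_sum (fun k' _ => hP.1 i k') (Finset.mem_univ k)
      _ = 1 := hP.2 i
  rcases a with k | k <;> rcases q with i | u
  · dsimp [XtF]; split <;> norm_num
  · dsimp [XtF]; split <;> norm_num
  · dsimp [XtF]
    rw [abs_of_nonneg (mul_nonneg hγ0 (hP.1 i k))]
    calc γ * P i k ≤ 1 * 1 :=
        mul_le_mul (le_of_lt hγ1) (hPle i k) (hP.1 i k) zero_le_one
      _ = 1 := by norm_num
  · dsimp [XtF]; norm_num

lemma SAf_std (a b : TwoN n) (i : Fin n) (q : CIdx n) :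
    SAf n γ P j (Matrix.single a b 1) i q
      = XtF n γ P j a (Sum.inl i) * XtF n γ P j b q := by
  simp [SAf, Matrix.single, Matrix.of_apply, mul_ite, mul_one, mul_zero, ite_and,
    ite_mul, zero_mul, Finset.sum_ite_eq, Finset.mem_univ]

lemma vuf_std (k : TwoN n) (i : Fin n) :
    vuf n γ P j (Matrix.single () k 1) i = XtF n γ P j k (Sum.inl i) := by
  simp [vuf, Matrix.single, Matrix.of_apply, ite_and, ite_mul, zero_mul, one_mul,
    Finset.sum_ite_eq, Finset.mem_univ]

lemma dGen1_bound (hP : RowStochastic P) (hr : ∀ i, |r i| ≤ R) (hR : 0 ≤ R)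
    (hγ0 : 0 ≤ γ) (hγ1 : γ < 1)
    (S1 : Fin n → CIdx n → ℝ) (v1 : Fin n → ℝ)
    (hS1 : ∀ i q, |S1 i q| ≤ 1) (hv1 : ∀ i, |v1 i| ≤ 1) :
    ∀ l i', |(dGen n r (SAf n γ P j (Atd n)) S1 v1 l).1 i'| ≤ (2 + n * R) / (1 - γ) := by
  have h1γ : (0:ℝ) < 1 - γ := by linarith
  have hnR : (0:ℝ) ≤ 2 + n * R := by positivity
  have hCa0 : (0:ℝ) ≤ (2 + n * R) / (1 - γ) := div_nonneg hnR (le_of_lt h1γ)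
  have hCa : (1 - γ) * ((2 + n * R) / (1 - γ)) = 2 + n * R := by
    field_simp
  intro l
  induction l with
  | zero => intro i'; simpa [dGen] using hCa0
  | succ l ih =>
    intro i'
    have key : (dGen n r (SAf n γ P j (Atd n)) S1 v1 (l + 1)).1 i'
        = γ * (∑ i, P i' i * (v1 i + (dGen n r (SAf n γ P j (Atd n)) S1 v1 l).1 i)) - v1 i'
          + ∑ i, (csGen n r (SAf n γ P j (Atd n)) 0 l).1 i * S1 i (Sum.inl i') := by
      show (dGen n r (SAf n γ P j (Atd n)) S1 v1 l).1 i'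
          + ∑ i, ((v1 i + (dGen n r (SAf n γ P j (Atd n)) S1 v1 l).1 i)
                * SAf n γ P j (Atd n) i (Sum.inl i')
              + (csGen n r (SAf n γ P j (Atd n)) 0 l).1 i * S1 i (Sum.inl i')) = _
      simp only [SAf_Atd_inl, mul_sub, mul_ite, mul_one, mul_zero, Finset.sum_add_distrib,
        Finset.sum_sub_distrib, Finset.sum_ite_eq', Finset.mem_univ, if_true]
      have hsum : ∑ i, (v1 i + (dGen n r (SAf n γ P j (Atd n)) S1 v1 l).1 i) * (γ * P i' i)
          = γ * ∑ i, P i' i * (v1 i + (dGen n r (SAf n γ P j (Atd n)) S1 v1 l).1 i) := by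
        rw [Finset.mul_sum]; exact Finset.sum_congr rfl fun i _ => by ring
      rw [hsum]; ring
    rw [key]
    have hb1 : |∑ i, P i' i * (v1 i + (dGen n r (SAf n γ P j (Atd n)) S1 v1 l).1 i)|
        ≤ 1 + (2 + n * R) / (1 - γ) := by
      calc |∑ i, P i' i * (v1 i + (dGen n r (SAf n γ P j (Atd n)) S1 v1 l).1 i)|
          ≤ ∑ i, |P i' i * (v1 i + (dGen n r (SAf n γ P j (Atd n)) S1 v1 l).1 i)| :=
            Finset.abs_sum_le_sum_abs _ _
        _ ≤ ∑ i, P i' i * (1 + (2 + n * R) / (1 - γ)) := by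
            apply Finset.sum_le_sum
            intro i _
            rw [abs_mul, abs_of_nonneg (hP.1 i' i)]
            refine mul_le_mul_of_nonneg_left ?_ (hP.1 i' i)
            calc |v1 i + (dGen n r (SAf n γ P j (Atd n)) S1 v1 l).1 i|
                ≤ |v1 i| + |(dGen n r (SAf n γ P j (Atd n)) S1 v1 l).1 i| := abs_add_le _ _
              _ ≤ 1 + (2 + n * R) / (1 - γ) := add_le_add (hv1 i) (ih i)
        _ = 1 + (2 + n * R) / (1 - γ) := by rw [← Finset.sum_mul, hP.2 i']; ring
    have hb2 : |∑ i, (csGen n r (SAf n γ P j (Atd n)) 0 l).1 i * S1 i (Sum.inl i')| ≤ n * R := by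
      calc |∑ i, (csGen n r (SAf n γ P j (Atd n)) 0 l).1 i * S1 i (Sum.inl i')|
          ≤ ∑ i, |(csGen n r (SAf n γ P j (Atd n)) 0 l).1 i * S1 i (Sum.inl i')| :=
            Finset.abs_sum_le_sum_abs _ _
        _ ≤ ∑ _i : Fin n, R := by
            apply Finset.sum_le_sum
            intro i _
            rw [abs_mul]
            calc |(csGen n r (SAf n γ P j (Atd n)) 0 l).1 i| * |S1 i (Sum.inl i')|
                ≤ (γ ^ l * R) * 1 :=
                  mul_le_mul (c0_bound n γ P r j hP hr hγ0 l i) (hS1 i (Sum.inl i'))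
                    (abs_nonneg _) (by positivity)
              _ = γ ^ l * R := by ring
              _ ≤ 1 * R := by
                  apply mul_le_mul_of_nonneg_right _ hR
                  exact pow_le_one₀ hγ0 (le_of_lt hγ1)
              _ = R := one_mul R
        _ = n * R := by simp [Finset.sum_const, mul_comm]
    calc |γ * (∑ i, P i' i * (v1 i + (dGen n r (SAf n γ P j (Atd n)) S1 v1 l).1 i)) - v1 i'
          + ∑ i, (csGen n r (SAf n γ P j (Atd n)) 0 l).1 i * S1 i (Sum.inl i')|
        ≤ |γ * (∑ i, P i' i * (v1 i + (dGen n r (SAf n γ P j (Atd n)) S1 v1 l).1 i)) - v1 i'|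
          + |∑ i, (csGen n r (SAf n γ P j (Atd n)) 0 l).1 i * S1 i (Sum.inl i')| := abs_add_le _ _
      _ ≤ (|γ * (∑ i, P i' i * (v1 i + (dGen n r (SAf n γ P j (Atd n)) S1 v1 l).1 i))|
          + |v1 i'|) + n * R := add_le_add (abs_sub _ _) hb2
      _ ≤ (γ * (1 + (2 + n * R) / (1 - γ)) + 1) + n * R := by
          refine add_le_add (add_le_add ?_ (hv1 i')) le_rfl
          rw [abs_mul, abs_of_nonneg hγ0]
          exact mul_le_mul_of_nonneg_left hb1 hγ0
      _ ≤ (2 + n * R) / (1 - γ) := by nlinarith [hCa, hCa0]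

lemma dGen2_bound (hP : RowStochastic P) (hr : ∀ i, |r i| ≤ R) (hR : 0 ≤ R)
    (hγ0 : 0 ≤ γ) (hγ1 : γ < 1)
    (S1 : Fin n → CIdx n → ℝ) (v1 : Fin n → ℝ)
    (hS1 : ∀ i q, |S1 i q| ≤ 1) (hv1 : ∀ i, |v1 i| ≤ 1) :
    ∀ l : ℕ, |(dGen n r (SAf n γ P j (Atd n)) S1 v1 l).2|
      ≤ l * (1 + (2 + n * R) / (1 - γ) + n * R) := by
  have h1γ : (0:ℝ) < 1 - γ := by linarith
  have hCa0 : (0:ℝ) ≤ (2 + n * R) / (1 - γ) := by positivity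
  intro l
  induction l with
  | zero => simp [dGen]
  | succ l ih =>
    have key : (dGen n r (SAf n γ P j (Atd n)) S1 v1 (l + 1)).2
        = (dGen n r (SAf n γ P j (Atd n)) S1 v1 l).2
          - (v1 j + (dGen n r (SAf n γ P j (Atd n)) S1 v1 l).1 j)
          + ∑ i, (csGen n r (SAf n γ P j (Atd n)) 0 l).1 i * S1 i (Sum.inr ()) := by
      show (dGen n r (SAf n γ P j (Atd n)) S1 v1 l).2
          + ∑ i, ((v1 i + (dGen n r (SAf n γ P j (Atd n)) S1 v1 l).1 i)
                * SAf n γ P j (Atd n) i (Sum.inr ())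
              + (csGen n r (SAf n γ P j (Atd n)) 0 l).1 i * S1 i (Sum.inr ())) = _
      simp only [SAf_Atd_inr, mul_neg, mul_ite, mul_one, mul_zero, Finset.sum_add_distrib,
        Finset.sum_neg_distrib, Finset.sum_ite_eq', Finset.mem_univ, if_true]
      ring
    rw [key]
    have hb2 : |∑ i, (csGen n r (SAf n γ P j (Atd n)) 0 l).1 i * S1 i (Sum.inr ())| ≤ n * R := by
      calc |∑ i, (csGen n r (SAf n γ P j (Atd n)) 0 l).1 i * S1 i (Sum.inr ())|
          ≤ ∑ i, |(csGen n r (SAf n γ P j (Atd n)) 0 l).1 i * S1 i (Sum.inr ())| :=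
            Finset.abs_sum_le_sum_abs _ _
        _ ≤ ∑ _i : Fin n, R := by
            apply Finset.sum_le_sum
            intro i _
            rw [abs_mul]
            calc |(csGen n r (SAf n γ P j (Atd n)) 0 l).1 i| * |S1 i (Sum.inr ())|
                ≤ (γ ^ l * R) * 1 :=
                  mul_le_mul (c0_bound n γ P r j hP hr hγ0 l i) (hS1 i (Sum.inr ()))
                    (abs_nonneg _) (by positivity)
              _ = γ ^ l * R := by ring
              _ ≤ 1 * R := by
                  apply mul_le_mul_of_nonneg_right _ hR
                  exact pow_le_one₀ hγ0 (le_of_lt hγ1)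
              _ = R := one_mul R
        _ = n * R := by simp [Finset.sum_const, mul_comm]
    have hbd : |v1 j + (dGen n r (SAf n γ P j (Atd n)) S1 v1 l).1 j|
        ≤ 1 + (2 + n * R) / (1 - γ) :=
      le_trans (abs_add_le _ _)
        (add_le_add (hv1 j) (dGen1_bound n γ P r j R hP hr hR hγ0 hγ1 S1 v1 hS1 hv1 l j))
    calc |(dGen n r (SAf n γ P j (Atd n)) S1 v1 l).2
          - (v1 j + (dGen n r (SAf n γ P j (Atd n)) S1 v1 l).1 j)
          + ∑ i, (csGen n r (SAf n γ P j (Atd n)) 0 l).1 i * S1 i (Sum.inr ())|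
        ≤ |(dGen n r (SAf n γ P j (Atd n)) S1 v1 l).2
            - (v1 j + (dGen n r (SAf n γ P j (Atd n)) S1 v1 l).1 j)|
          + |∑ i, (csGen n r (SAf n γ P j (Atd n)) 0 l).1 i * S1 i (Sum.inr ())| := abs_add_le _ _
      _ ≤ (|(dGen n r (SAf n γ P j (Atd n)) S1 v1 l).2|
            + |v1 j + (dGen n r (SAf n γ P j (Atd n)) S1 v1 l).1 j|) + n * R :=
          add_le_add (abs_sub _ _) hb2
      _ ≤ (l * (1 + (2 + n * R) / (1 - γ) + n * R) + (1 + (2 + n * R) / (1 - γ))) + n * R :=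
          add_le_add (add_le_add ih hbd) le_rfl
      _ ≤ (l + 1 : ℕ) * (1 + (2 + n * R) / (1 - γ) + n * R) := by
          push_cast
          ring_nf
          nlinarith [hCa0]

lemma gvec_bound (hP : RowStochastic P) (hr : ∀ i, |r i| ≤ R) (hR : 0 ≤ R)
    (hγ0 : 0 ≤ γ) (hγ1 : γ < 1) (L : ℕ) (idx : (TwoN n × TwoN n) ⊕ TwoN n) :
    |gvec γ P r L j idx| ≤ (L + 1) * (1 + (2 + n * R) / (1 - γ) + n * R) := by
  have h1γ : (0:ℝ) < 1 - γ := by linarith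
  have hK0 : (0:ℝ) ≤ 1 + (2 + n * R) / (1 - γ) + n * R := by positivity
  have hstep : ∀ S1 v1, (∀ i q, |S1 i q| ≤ 1) → (∀ i, |v1 i| ≤ 1) →
      |(dGen n r (SAf n γ P j (Atd n)) S1 v1 L).2|
        ≤ (L + 1) * (1 + (2 + n * R) / (1 - γ) + n * R) := by
    intro S1 v1 hS1 hv1
    calc |(dGen n r (SAf n γ P j (Atd n)) S1 v1 L).2|
        ≤ L * (1 + (2 + n * R) / (1 - γ) + n * R) :=
          dGen2_bound n γ P r j R hP hr hR hγ0 hγ1 S1 v1 hS1 hv1 L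
      _ ≤ (L + 1) * (1 + (2 + n * R) / (1 - γ) + n * R) := by nlinarith [hK0]
  rcases idx with ⟨a, b⟩ | k
  · rw [gvec_inl, abs_neg]
    refine hstep _ _ ?_ ?_
    · intro i q
      rw [SAf_std, abs_mul]
      calc |XtF n γ P j a (Sum.inl i)| * |XtF n γ P j b q| ≤ 1 * 1 :=
          mul_le_mul (XtF_bound n γ P j hP hγ0 hγ1 a (Sum.inl i))
            (XtF_bound n γ P j hP hγ0 hγ1 b q) (abs_nonneg _) zero_le_one
        _ = 1 := by norm_num
    · intro i; simp
  · rw [gvec_inr, abs_neg]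
    refine hstep _ _ ?_ ?_
    · intro i q; simp
    · intro i
      rw [vuf_std]
      exact XtF_bound n γ P j hP hγ0 hγ1 k (Sum.inl i)

end comp5


/-- The product σ-algebra on matrices, via the identification with the Pi type. -/
instance matrixMeasurableSpace {m k α : Type*} [MeasurableSpace α] :
    MeasurableSpace (Matrix m k α) :=
  inferInstanceAs (MeasurableSpace (m → k → α))

/-- Theorem 2: the ℓ1 norm of the expected multi-task TD update of the
looped transformer evaluated at the TD parameters tends to 0 as the depth L → ∞. -/
theorem stmt17 (n : ℕ) (hn : 1 ≤ n) (γ : ℝ) (hγ0 : 0 ≤ γ) (hγ1 : γ < 1)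
    (R : ℝ) (hR : 0 < R)
    (μ : MeasureTheory.Measure (Matrix (Fin n) (Fin n) ℝ × (Fin n → ℝ)))
    [MeasureTheory.IsProbabilityMeasure μ]
    (ρ : Matrix (Fin n) (Fin n) ℝ → (Fin n → ℝ)) (hρmeas : Measurable ρ)
    (hae : ∀ᵐ pr ∂μ, RowStochastic pr.1 ∧ ‖pr.2‖ ≤ R
      ∧ (∀ ω, 0 ≤ ρ pr.1 ω) ∧ (∑ ω, ρ pr.1 ω) = 1
      ∧ pr.1ᵀ.mulVec (ρ pr.1) = ρ pr.1) :
    Tendsto (fun L : ℕ => ∑ idx : (TwoN n × TwoN n) ⊕ TwoN n,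
        |(∫ pr, (∑ ω, (ρ pr.1 ω * ∑ j, pr.1 ω j *
              (pr.2 ω + γ * tfTD γ pr.1 pr.2 j L - tfTD γ pr.1 pr.2 ω L)) •
            gvec γ pr.1 pr.2 L ω) ∂μ) idx|)
      atTop (𝓝 0) := by
  classical
  have h1γ : (0:ℝ) < 1 - γ := by linarith
  set K0 : ℝ := 1 + (2 + n * R) / (1 - γ) + n * R with hK0def
  have hK0 : (0:ℝ) ≤ K0 := by rw [hK0def]; positivity
  set C : ℝ := (Fintype.card ((TwoN n × TwoN n) ⊕ TwoN n) : ℝ) * (R * K0) with hCdef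
  have hbound : ∀ L : ℕ, (∑ idx : (TwoN n × TwoN n) ⊕ TwoN n,
      |(∫ pr, (∑ ω, (ρ pr.1 ω * ∑ j, pr.1 ω j *
            (pr.2 ω + γ * tfTD γ pr.1 pr.2 j L - tfTD γ pr.1 pr.2 ω L)) •
          gvec γ pr.1 pr.2 L ω) ∂μ) idx|) ≤ C * (((L:ℝ) + 1) * γ ^ L) := by
    intro L
    set CL : ℝ := R * γ ^ L * (((L:ℝ) + 1) * K0) with hCLdef
    have hCL0 : (0:ℝ) ≤ CL := by rw [hCLdef]; positivity
    have haebound : ∀ᵐ pr ∂μ, ‖(∑ ω, (ρ pr.1 ω * ∑ j, pr.1 ω j *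
          (pr.2 ω + γ * tfTD γ pr.1 pr.2 j L - tfTD γ pr.1 pr.2 ω L)) •
        gvec γ pr.1 pr.2 L ω)‖ ≤ CL := by
      filter_upwards [hae] with pr hpr
      obtain ⟨hPst, hrn, hρ0, hρ1, _⟩ := hpr
      have hr' : ∀ i, |pr.2 i| ≤ R := fun i =>
        le_trans (by simpa using norm_le_pi_norm pr.2 i) hrn
      have hcoef : ∀ ω, |∑ j, pr.1 ω j *
          (pr.2 ω + γ * tfTD γ pr.1 pr.2 j L - tfTD γ pr.1 pr.2 ω L)| ≤ γ ^ L * R := by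
        intro ω
        have he : ∑ j', pr.1 ω j' *
            (pr.2 ω + γ * tfTD γ pr.1 pr.2 j' L - tfTD γ pr.1 pr.2 ω L)
            = tdW γ pr.1 pr.2 (L + 1) ω - tdW γ pr.1 pr.2 L ω := by
          have h1 : ∀ j' : Fin n, tfTD γ pr.1 pr.2 j' L = tdW γ pr.1 pr.2 L j' := fun j' =>
            tfTD_eq n γ pr.1 pr.2 j' L
          simp_rw [h1]
          have hm : tdW γ pr.1 pr.2 (L + 1) ω
              = pr.2 ω + γ * ∑ k, pr.1 ω k * tdW γ pr.1 pr.2 L k := by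
            show (pr.2 + γ • pr.1.mulVec (tdW γ pr.1 pr.2 L)) ω = _
            simp [Matrix.mulVec, dotProduct]
          rw [hm]
          have hpull : ∑ j', pr.1 ω j' * (γ * tdW γ pr.1 pr.2 L j')
              = γ * ∑ k, pr.1 ω k * tdW γ pr.1 pr.2 L k := by
            rw [Finset.mul_sum]; exact Finset.sum_congr rfl fun k _ => by ring
          simp only [mul_add, mul_sub, Finset.sum_add_distrib, Finset.sum_sub_distrib,
            ← Finset.sum_mul, hPst.2 ω, one_mul, hpull]
          try ring
        rw [he, tdW_diff n γ pr.1 pr.2 ω L ω]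
        exact c0_bound n γ pr.1 pr.2 ω hPst hr' hγ0 L ω
      rw [pi_norm_le_iff_of_nonneg hCL0]
      intro idx
      rw [Real.norm_eq_abs]
      have hexp : (∑ ω, (ρ pr.1 ω * ∑ j, pr.1 ω j *
            (pr.2 ω + γ * tfTD γ pr.1 pr.2 j L - tfTD γ pr.1 pr.2 ω L)) •
          gvec γ pr.1 pr.2 L ω) idx
          = ∑ ω, (ρ pr.1 ω * ∑ j, pr.1 ω j *
              (pr.2 ω + γ * tfTD γ pr.1 pr.2 j L - tfTD γ pr.1 pr.2 ω L))
            * gvec γ pr.1 pr.2 L ω idx := by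
        simp [Finset.sum_apply, Pi.smul_apply, smul_eq_mul]
      rw [hexp]
      calc |∑ ω, (ρ pr.1 ω * ∑ j, pr.1 ω j *
              (pr.2 ω + γ * tfTD γ pr.1 pr.2 j L - tfTD γ pr.1 pr.2 ω L))
            * gvec γ pr.1 pr.2 L ω idx|
          ≤ ∑ ω, |(ρ pr.1 ω * ∑ j, pr.1 ω j *
              (pr.2 ω + γ * tfTD γ pr.1 pr.2 j L - tfTD γ pr.1 pr.2 ω L))
            * gvec γ pr.1 pr.2 L ω idx| := Finset.abs_sum_le_sum_abs _ _
        _ ≤ ∑ ω, ρ pr.1 ω * (γ ^ L * R * (((L:ℝ) + 1) * K0)) := by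
            apply Finset.sum_le_sum
            intro ω _
            rw [abs_mul, abs_mul, abs_of_nonneg (hρ0 ω), mul_assoc]
            refine mul_le_mul_of_nonneg_left ?_ (hρ0 ω)
            have hg : |gvec γ pr.1 pr.2 L ω idx| ≤ ((L:ℝ) + 1) * K0 := by
              rw [hK0def]
              exact_mod_cast gvec_bound n γ pr.1 pr.2 ω R hPst hr' (le_of_lt hR)
                hγ0 hγ1 L idx
            calc |∑ j, pr.1 ω j *
                  (pr.2 ω + γ * tfTD γ pr.1 pr.2 j L - tfTD γ pr.1 pr.2 ω L)|
                * |gvec γ pr.1 pr.2 L ω idx|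
                ≤ (γ ^ L * R) * (((L:ℝ) + 1) * K0) :=
                  mul_le_mul (hcoef ω) hg (abs_nonneg _) (by positivity)
              _ = γ ^ L * R * (((L:ℝ) + 1) * K0) := by ring
        _ = CL := by
            rw [← Finset.sum_mul, hρ1, one_mul, hCLdef]
            ring
    have hint : ∀ idx, |(∫ pr, (∑ ω, (ρ pr.1 ω * ∑ j, pr.1 ω j *
          (pr.2 ω + γ * tfTD γ pr.1 pr.2 j L - tfTD γ pr.1 pr.2 ω L)) •
        gvec γ pr.1 pr.2 L ω) ∂μ) idx| ≤ CL := by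
      intro idx
      have h2 := MeasureTheory.norm_integral_le_of_norm_le_const (μ := μ) haebound
      refine le_trans ?_ (le_trans h2 (by simp))
      simpa [Real.norm_eq_abs] using norm_le_pi_norm
        (∫ pr, (∑ ω, (ρ pr.1 ω * ∑ j, pr.1 ω j *
            (pr.2 ω + γ * tfTD γ pr.1 pr.2 j L - tfTD γ pr.1 pr.2 ω L)) •
          gvec γ pr.1 pr.2 L ω) ∂μ) idx
    calc (∑ idx : (TwoN n × TwoN n) ⊕ TwoN n,
        |(∫ pr, (∑ ω, (ρ pr.1 ω * ∑ j, pr.1 ω j *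
              (pr.2 ω + γ * tfTD γ pr.1 pr.2 j L - tfTD γ pr.1 pr.2 ω L)) •
            gvec γ pr.1 pr.2 L ω) ∂μ) idx|)
        ≤ ∑ _idx : (TwoN n × TwoN n) ⊕ TwoN n, CL :=
          Finset.sum_le_sum fun idx _ => hint idx
      _ = (Fintype.card ((TwoN n × TwoN n) ⊕ TwoN n) : ℝ) * CL := by
          simp [Finset.sum_const, Finset.card_univ, nsmul_eq_mul]
      _ = C * (((L:ℝ) + 1) * γ ^ L) := by
          rw [hCdef, hCLdef]; ring
  have hlim : Tendsto (fun L : ℕ => C * (((L:ℝ) + 1) * γ ^ L)) atTop (𝓝 0) := by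
    have ha : Tendsto (fun L : ℕ => (L:ℝ) * γ ^ L) atTop (𝓝 0) := by
      have hs : Summable (fun L : ℕ => ((L:ℝ) ^ 1) * γ ^ L) :=
        summable_pow_mul_geometric_of_norm_lt_one 1
          (by rwa [Real.norm_eq_abs, abs_of_nonneg hγ0])
      simpa using hs.tendsto_atTop_zero
    have hb : Tendsto (fun L : ℕ => γ ^ L) atTop (𝓝 0) :=
      tendsto_pow_atTop_nhds_zero_of_lt_one hγ0 hγ1
    have hsum : Tendsto (fun L : ℕ => ((L:ℝ) + 1) * γ ^ L) atTop (𝓝 0) := by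
      have := ha.add hb
      simp only [add_zero] at this
      refine this.congr fun L => ?_
      ring
    simpa using hsum.const_mul C
  refine squeeze_zero (fun L => Finset.sum_nonneg fun idx _ => abs_nonneg _) hbound hlim

end
end
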